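/- arXiv:1808.06747 — 5 statements merged into one kernel-verified Lean document; each statement's English description precedes it below -/
import Mathlib

section
/- Let X be a Banach lattice and let (f_n) be a norm bounded disjoint sequence in the positive cone X₊. Then (f_n) converges weakly to 0 if and only if no subsequence of (f_n) is equivalent to the unit vector basis of ℓ¹ (i.e., no subsequence (f_{n_k}) satisfies a lower ℓ¹-estimate: there exists M > 0 with (1/M)·∑_{k=1}^m |a_k| ≤ ‖∑_{k=1}^m a_k f_{n_k}‖ for all m and scalars a_k). -/
open Filter Topology Pointwise

noncomputable section

/-- A directed index type for nets. -/
structure DirectedType : Type 1 where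
  ι : Type
  r : ι → ι → Prop
  nonempty : Nonempty ι
  refl : ∀ a, r a a
  trans : ∀ a b c, r a b → r b c → r a c
  directed : ∀ a b, ∃ c, r a c ∧ r b c

/-- The natural numbers as a directed type (for sequences). -/
def natDir : DirectedType where
  ι := ℕ
  r := (· ≤ ·)
  nonempty := ⟨0⟩
  refl := fun _ => le_refl _
  trans := fun _ _ _ => le_trans
  directed := fun a b => ⟨max a b, le_max_left _ _, le_max_right _ _⟩

/-- A real valued net tends to zero. -/
def NetTendstoZero (D : DirectedType) (u : D.ι → ℝ) : Prop :=
  ∀ ε : ℝ, 0 < ε → ∃ i₀, ∀ i, D.r i₀ i → |u i| < ε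

variable {X : Type*} [NormedAddCommGroup X] [Lattice X] [HasSolidNorm X] [IsOrderedAddMonoid X] [NormedSpace ℝ X]

/-- Order convergence of a net: there is a decreasing net `h` with infimum `0`
dominating `|f i - x|` eventually. -/
def OrderConvNet (D : DirectedType) (f : D.ι → X) (x : X) : Prop :=
  ∃ (E : DirectedType) (h : E.ι → X),
    (∀ γ₁ γ₂, E.r γ₁ γ₂ → h γ₂ ≤ h γ₁) ∧ IsGLB (Set.range h) 0 ∧
      ∀ γ, ∃ i₀, ∀ i, D.r i₀ i → |f i - x| ≤ h γ

/-- The order closure of a set: all limits of order convergent nets from the set. -/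
def OrderClosure (C : Set X) : Set X :=
  {x | ∃ (D : DirectedType) (f : D.ι → X), (∀ i, f i ∈ C) ∧ OrderConvNet D f x}

/-- A set is order closed if it contains all order limits of nets from it. -/
def IsOrderClosed (C : Set X) : Prop := OrderClosure C ⊆ C

/-- Unbounded order convergence of a net. -/
def UOConvNet (D : DirectedType) (f : D.ι → X) (x : X) : Prop :=
  ∀ h : X, 0 ≤ h → OrderConvNet D (fun i => |f i - x| ⊓ h) 0

/-- Membership in the order continuous dual `X_n^~`. -/
def InOCDual (g : X →L[ℝ] ℝ) : Prop :=
  ∀ (D : DirectedType) (f : D.ι → X), OrderConvNet D f 0 →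
    NetTendstoZero D fun i => g (f i)

/-- Membership in the unbounded order continuous dual `X_uo^~`. -/
def InUODual (g : X →L[ℝ] ℝ) : Prop :=
  ∀ (D : DirectedType) (f : D.ι → X), (∃ M, ∀ i, ‖f i‖ ≤ M) → UOConvNet D f 0 →
    NetTendstoZero D fun i => g (f i)

/-- Convergence of a net in the topology `σ(X, X_n^~)`. -/
def SigmaNConvNet (D : DirectedType) (f : D.ι → X) (x : X) : Prop :=
  ∀ g : X →L[ℝ] ℝ, InOCDual g → NetTendstoZero D fun i => g (f i) - g x

/-- Convergence of a net in the topology `σ(X, X_uo^~)`. -/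
def SigmaUOConvNet (D : DirectedType) (f : D.ι → X) (x : X) : Prop :=
  ∀ g : X →L[ℝ] ℝ, InUODual g → NetTendstoZero D fun i => g (f i) - g x

/-- A set is `σ(X, X_n^~)`-closed. -/
def IsSigmaNClosed (C : Set X) : Prop :=
  ∀ (D : DirectedType) (f : D.ι → X), (∀ i, f i ∈ C) →
    ∀ x, SigmaNConvNet D f x → x ∈ C

/-- A set is `σ(X, X_uo^~)`-closed. -/
def IsSigmaUOClosed (C : Set X) : Prop :=
  ∀ (D : DirectedType) (f : D.ι → X), (∀ i, f i ∈ C) →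
    ∀ x, SigmaUOConvNet D f x → x ∈ C

/-- The `σ(X, X_n^~)`-closure of a set. -/
def SigmaNClosure (C : Set X) : Set X :=
  {x | ∃ (D : DirectedType) (f : D.ι → X), (∀ i, f i ∈ C) ∧ SigmaNConvNet D f x}

/-- The `|σ|(X, X_n^~)`-sequential closure of a set. -/
def AbsSigmaSeqClosure (C : Set X) : Set X :=
  {x | ∃ s : ℕ → X, (∀ n, s n ∈ C) ∧
    ∀ g : X →L[ℝ] ℝ, InOCDual g → Tendsto (fun n => g (|s n - x|)) atTop (𝓝 0)}

/-- A set is `|σ|(X, X_n^~)`-sequentially closed. -/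
def IsAbsSigmaSeqClosed (C : Set X) : Prop := AbsSigmaSeqClosure C ⊆ C

/-- The order on the dual: `g ≤ h` iff `g x ≤ h x` on the positive cone. -/
def dualLE (g h : X →L[ℝ] ℝ) : Prop := ∀ x : X, 0 ≤ x → g x ≤ h x

/-- Order continuity of the norm on a subset `S` of the dual: every net in `S`
decreasing to `0` (infimum `0` among lower bounds from `S`) converges to `0` in
the operator norm. -/
def DualOCOn (S : Set (X →L[ℝ] ℝ)) : Prop :=
  ∀ (D : DirectedType) (f : D.ι → (X →L[ℝ] ℝ)), (∀ i, f i ∈ S) →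
    (∀ i j, D.r i j → dualLE (f j) (f i)) → (∀ i, dualLE 0 (f i)) →
    (∀ h ∈ S, (∀ i, dualLE h (f i)) → dualLE h 0) →
    NetTendstoZero D fun i => ‖f i‖

/-- A sequence is weakly null. -/
def WeaklyNull (f : ℕ → X) : Prop :=
  ∀ g : X →L[ℝ] ℝ, Tendsto (fun n => g (f n)) atTop (𝓝 0)

/-- The sequence satisfies a lower `ℓ¹`-estimate, i.e. it is equivalent to the
unit vector basis of `ℓ¹`. -/
def IsL1Basic (f : ℕ → X) : Prop :=
  ∃ M : ℝ, 0 < M ∧ ∀ (m : ℕ) (a : ℕ → ℝ),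
    (1 / M) * ∑ k ∈ Finset.range m, |a k| ≤ ‖∑ k ∈ Finset.range m, a k • f k‖

variable (X)

/-- Order continuity of the norm of `X`. -/
def OCNorm : Prop :=
  ∀ (D : DirectedType) (f : D.ι → X), (∀ i j, D.r i j → f j ≤ f i) →
    IsGLB (Set.range f) 0 → NetTendstoZero D fun i => ‖f i‖

/-- The order continuous dual as a set of continuous linear functionals. -/
def OCDual : Set (X →L[ℝ] ℝ) := {g | InOCDual g}

/-- The norm dual `X*` is order continuous. -/
def DualOrderContinuous : Prop := DualOCOn (Set.univ : Set (X →L[ℝ] ℝ))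

/-- The order continuous dual `X_n^~` is order continuous. -/
def OCDualOrderContinuous : Prop := DualOCOn (OCDual X)

/-- `X` is monotonically complete. -/
def MonotonicallyComplete : Prop :=
  ∀ (D : DirectedType) (f : D.ι → X), (∀ i j, D.r i j → f i ≤ f j) →
    (∃ M, ∀ i, ‖f i‖ ≤ M) → ∃ s, IsLUB (Set.range f) s

/-- `X` is Dedekind complete. -/
def DedekindComplete : Prop :=
  ∀ S : Set X, S.Nonempty → BddAbove S → ∃ s, IsLUB S s

/-- `X` is σ-Dedekind complete. -/
def SigmaDedekindComplete : Prop :=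
  ∀ f : ℕ → X, BddAbove (Set.range f) → ∃ s, IsLUB (Set.range f) s

/-- `X` has the weak Fatou property. -/
def WeakFatou : Prop :=
  ∃ r : ℝ, 0 < r ∧ ∀ (D : DirectedType) (f : D.ι → X),
    (∀ i j, D.r i j → f i ≤ f j) → ∀ s, IsLUB (Set.range f) s →
    ∀ M : ℝ, (∀ i, ‖f i‖ ≤ M) → ‖s‖ ≤ r * M

/-- `X_n^~` separates the points of `X`. -/
def OCDualSeparatesPoints : Prop :=
  ∀ x : X, x ≠ 0 → ∃ g : X →L[ℝ] ℝ, InOCDual g ∧ g x ≠ 0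

/-- `X_n^~` contains a strictly positive element. -/
def HasStrictlyPositiveOCFunctional : Prop :=
  ∃ g : X →L[ℝ] ℝ, InOCDual g ∧ ∀ x : X, x ≠ 0 → 0 < g (|x|)

/-- The unit ball `B` determined by `X_n^~`. -/
def KSBall : Set X :=
  {x | ∀ g : X →L[ℝ] ℝ, InOCDual g → dualLE 0 g → ‖g‖ ≤ 1 → g (|x|) ≤ 1}

/-- `σ(X, X_n^~)` has the Krein–Smulian property. -/
def KreinSmulianProperty : Prop :=
  ∀ C : Set X, Convex ℝ C →
    (∀ k : ℕ, IsSigmaNClosed (C ∩ (k : ℝ) • KSBall X)) → IsSigmaNClosed C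

/-- Property `P1`: every order closed convex set is `σ(X, X_n^~)`-closed. -/
def PropP1 : Prop := ∀ C : Set X, Convex ℝ C → IsOrderClosed C → IsSigmaNClosed C

/-- Property `P4`: every norm bounded order closed convex set is
`|σ|(X, X_n^~)`-sequentially closed. -/
def PropP4 : Prop :=
  ∀ C : Set X, Convex ℝ C → (∃ M, ∀ x ∈ C, ‖x‖ ≤ M) → IsOrderClosed C →
    IsAbsSigmaSeqClosed C

/-- The disjoint order continuity property. -/
def DOCP : Prop :=
  ∀ f : ℕ → X, (∀ n, 0 ≤ f n) → (∃ M, ∀ n, ‖f n‖ ≤ M) →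
    (∀ n m, n ≠ m → f n ⊓ f m = 0) →
    (∀ g : X →L[ℝ] ℝ, InOCDual g → Tendsto (fun n => g (f n)) atTop (𝓝 0)) →
    WeaklyNull f

/-- The order continuous part `X_a` of `X`. -/
def OrderContPart : Set X :=
  {f | ∀ (D : DirectedType) (g : D.ι → X), (∀ i, |g i| ≤ |f|) →
    OrderConvNet D g 0 → NetTendstoZero D fun i => ‖g i‖}

/-- The order subsequence splitting property. -/
def OSSP : Prop :=
  ∀ f : ℕ → X, (∀ n, 0 ≤ f n) → (∃ M, ∀ n, ‖f n‖ ≤ M) → UOConvNet natDir f 0 →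
    ∃ φ : ℕ → ℕ, StrictMono φ ∧ ∃ x y z : ℕ → X,
      (∀ k, f (φ k) = x k + y k + z k) ∧
      (∀ k, 0 ≤ x k) ∧ (∀ k, 0 ≤ y k) ∧ (∀ k, 0 ≤ z k) ∧
      (∀ k, x k ∈ OrderContPart X) ∧
      (∀ k l, k ≠ l → y k ⊓ y l = 0) ∧
      (∃ b, ∀ k, z k ≤ b)

variable {X}

section AuxLemmas

variable {Y : Type*} [NormedAddCommGroup Y] [Lattice Y] [HasSolidNorm Y] [IsOrderedAddMonoid Y]

lemma aux_inf_add_le {a b c : Y} (ha : 0 ≤ a) (hb : 0 ≤ b) (hc : 0 ≤ c) :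
    a ⊓ (b + c) ≤ a ⊓ b + a ⊓ c := by
  have key : a ⊓ (b + c) - a ⊓ b ≤ a ⊓ c := by
    rw [sub_eq_add_neg, neg_inf, add_sup]
    refine sup_le ?_ ?_
    · rw [← sub_eq_add_neg]
      exact le_trans (sub_nonpos.2 inf_le_left) (le_inf ha hc)
    · rw [← sub_eq_add_neg]
      refine le_inf ?_ ?_
      · exact le_trans (sub_le_self _ hb) inf_le_left
      · exact sub_le_iff_le_add'.2 inf_le_right
  calc a ⊓ (b + c) = (a ⊓ (b + c) - a ⊓ b) + a ⊓ b := by abel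
    _ ≤ a ⊓ c + a ⊓ b := add_le_add_left key _
    _ = a ⊓ b + a ⊓ c := add_comm _ _

lemma aux_disj_add {x y z : Y} (hx : 0 ≤ x) (hy : 0 ≤ y) (hz : 0 ≤ z)
    (hxz : x ⊓ z = 0) (hyz : y ⊓ z = 0) : (x + y) ⊓ z = 0 := by
  refine le_antisymm ?_ (le_inf (add_nonneg hx hy) hz)
  calc (x + y) ⊓ z = z ⊓ (x + y) := inf_comm _ _
    _ ≤ z ⊓ x + z ⊓ y := aux_inf_add_le hz hx hy
    _ = 0 := by rw [inf_comm z x, inf_comm z y, hxz, hyz, add_zero]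

lemma aux_nsmul_disj {v w : Y} (hv : 0 ≤ v) (hw : 0 ≤ w) (h : v ⊓ w = 0) (n : ℕ) :
    (n • v) ⊓ w = 0 := by
  induction n with
  | zero => rw [zero_smul]; exact inf_of_le_left hw
  | succ n ih =>
    rw [succ_nsmul]
    exact aux_disj_add (nsmul_nonneg hv n) hv hw ih h

lemma aux_nsmul_pos {y : Y} (n : ℕ) (h : 0 ≤ (n + 1) • y) : 0 ≤ y := by
  have hsub : y⁺ - y⁻ = y := posPart_sub_negPart y
  have h1 : (n + 1) • y⁻ ≤ (n + 1) • y⁺ := by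
    have h2 : 0 ≤ (n + 1) • y⁺ - (n + 1) • y⁻ := by rwa [← smul_sub, hsub]
    exact sub_nonneg.1 h2
  have hd : y⁻ ⊓ y⁺ = 0 := by
    rw [inf_comm]; exact posPart_inf_negPart_eq_zero y
  have h3 : ((n + 1) • y⁻) ⊓ ((n + 1) • y⁺) = 0 := by
    have s1 : ((n + 1) • y⁻) ⊓ y⁺ = 0 :=
      aux_nsmul_disj (negPart_nonneg y) (posPart_nonneg y) hd (n + 1)
    have s2 : (y⁺) ⊓ ((n + 1) • y⁻) = 0 := by rw [inf_comm]; exact s1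
    have s3 := aux_nsmul_disj (posPart_nonneg y) (nsmul_nonneg (negPart_nonneg y) (n + 1)) s2 (n + 1)
    rw [inf_comm]; exact s3
  have h4 : (n + 1) • y⁻ = 0 := by
    rw [← h3]; exact (inf_of_le_left h1).symm
  have h5 : y⁻ ≤ (n + 1) • y⁻ := by
    rw [succ_nsmul]
    exact le_add_of_nonneg_left (nsmul_nonneg (negPart_nonneg y) n)
  have h6 : y⁻ = 0 := le_antisymm (h4 ▸ h5) (negPart_nonneg y)
  exact negPart_eq_zero.1 h6

variable [NormedSpace ℝ Y]

lemma aux_rat_smul_nonneg {v : Y} (hv : 0 ≤ v) (q : ℚ) (hq : 0 ≤ q) : 0 ≤ (q : ℝ) • v := by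
  obtain ⟨n, hn⟩ : ∃ n : ℕ, q.den = n + 1 := ⟨q.den - 1, by have := q.pos; omega⟩
  apply aux_nsmul_pos n
  have key : (n + 1) • ((q : ℝ) • v) = (q.num.toNat : ℕ) • v := by
    rw [← Nat.cast_smul_eq_nsmul ℝ, ← Nat.cast_smul_eq_nsmul ℝ, smul_smul]
    congr 1
    have hnum : (q.num : ℚ) = q * q.den := by
      exact (Rat.mul_den_eq_num q).symm
    have : ((n : ℝ) + 1) = (q.den : ℝ) := by exact_mod_cast congrArg (Nat.cast (R := ℝ)) hn.symm
    push_cast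
    rw [this]
    have : (q.num.toNat : ℝ) = (q.num : ℝ) := by
      exact_mod_cast Int.toNat_of_nonneg (Rat.num_nonneg.2 hq)
    rw [this]
    have := congrArg (Rat.cast (K := ℝ)) hnum
    push_cast at this
    rw [this]; ring
  rw [key]
  exact nsmul_nonneg hv _

lemma aux_smul_nonneg {v : Y} (hv : 0 ≤ v) {a : ℝ} (ha : 0 ≤ a) : 0 ≤ a • v := by
  have hex : ∀ n : ℕ, ∃ q : ℚ, a < (q : ℝ) ∧ (q : ℝ) < a + 1 / (n + 1) := by
    intro n
    exact exists_rat_btwn (lt_add_of_pos_right a (by positivity))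
  choose q hq1 hq2 using hex
  have hub : Tendsto (fun n : ℕ => a + 1 / (n + 1 : ℝ)) atTop (𝓝 (a + 0)) :=
    tendsto_const_nhds.add tendsto_one_div_add_atTop_nhds_zero_nat
  rw [add_zero] at hub
  have hten : Tendsto (fun n => ((q n : ℝ))) atTop (𝓝 a) :=
    tendsto_of_tendsto_of_tendsto_of_le_of_le tendsto_const_nhds hub
      (fun n => (hq1 n).le) (fun n => (hq2 n).le)
  have hsm : Tendsto (fun n => (q n : ℝ) • v) atTop (𝓝 (a • v)) :=
    hten.smul tendsto_const_nhds
  refine isClosed_nonneg.mem_of_tendsto hsm (Filter.Eventually.of_forall fun n => ?_)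
  refine aux_rat_smul_nonneg hv (q n) ?_
  have : (0 : ℝ) < (q n : ℝ) := lt_of_le_of_lt ha (hq1 n)
  exact_mod_cast this.le

lemma aux_abs_smul {v : Y} (hv : 0 ≤ v) (a : ℝ) : |a • v| = |a| • v := by
  rcases le_total 0 a with h | h
  · rw [abs_of_nonneg (aux_smul_nonneg hv h), abs_of_nonneg h]
  · have h0 : 0 ≤ (-a) • v := aux_smul_nonneg hv (neg_nonneg.2 h)
    rw [neg_smul] at h0
    rw [abs_of_nonpos (neg_nonneg.1 h0), abs_of_nonpos h, ← neg_smul]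

lemma aux_smul_disj {v w : Y} (hv : 0 ≤ v) (hw : 0 ≤ w) (h : v ⊓ w = 0)
    {a b : ℝ} (ha : 0 ≤ a) (hb : 0 ≤ b) : (a • v) ⊓ (b • w) = 0 := by
  obtain ⟨n, hn⟩ := exists_nat_ge (max a b)
  have hbig : ∀ {c : ℝ} {u : Y}, 0 ≤ u → 0 ≤ c → c ≤ n → c • u ≤ n • u := by
    intro c u hu hc hcn
    have h0 : 0 ≤ ((n : ℝ) - c) • u := aux_smul_nonneg hu (by linarith)
    rw [sub_smul] at h0
    have := sub_nonneg.1 h0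
    rwa [Nat.cast_smul_eq_nsmul] at this
  refine le_antisymm ?_ (le_inf (aux_smul_nonneg hv ha) (aux_smul_nonneg hw hb))
  calc (a • v) ⊓ (b • w) ≤ (n • v) ⊓ (n • w) :=
        inf_le_inf (hbig hv ha (le_trans (le_max_left a b) hn))
          (hbig hw hb (le_trans (le_max_right a b) hn))
    _ = 0 := by
        have s1 : (n • v) ⊓ w = 0 := aux_nsmul_disj hv hw h n
        have s2 : w ⊓ (n • v) = 0 := by rw [inf_comm]; exact s1
        have s3 := aux_nsmul_disj hw (nsmul_nonneg hv n) s2 n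
        rw [inf_comm]; exact s3

lemma aux_abs_add_disj {x y : Y} (h : |x| ⊓ |y| = 0) : |x + y| = |x| + |y| := by
  have key : ∀ u w : Y, |u| ⊓ |w| = 0 → |u| ≤ |u + w| := by
    intro u w hd
    have h1 : |u| ≤ |u + w| + |w| := by
      calc |u| = |(u + w) + (-w)| := by rw [add_neg_cancel_right]
        _ ≤ |u + w| + |(-w)| := abs_add_le _ _
        _ = |u + w| + |w| := by rw [abs_neg]
    calc |u| = |u| ⊓ (|u + w| + |w|) := (inf_of_le_left h1).symm
      _ ≤ |u| ⊓ |u + w| + |u| ⊓ |w| := aux_inf_add_le (abs_nonneg u) (abs_nonneg _) (abs_nonneg w)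
      _ = |u| ⊓ |u + w| := by rw [hd, add_zero]
      _ ≤ |u + w| := inf_le_right
  have hx := key x y h
  have hy := key y x (by rw [inf_comm]; exact h)
  rw [add_comm] at hy
  refine le_antisymm (abs_add_le x y) ?_
  calc |x| + |y| = |x| ⊓ |y| + (|x| ⊔ |y|) := (inf_add_sup _ _).symm
    _ = |x| ⊔ |y| := by rw [h, zero_add]
    _ ≤ |x + y| := sup_le hx hy

lemma aux_sum_disj {u : ℕ → Y} {w : Y} (hu : ∀ k, 0 ≤ u k) (hw : 0 ≤ w)
    (h : ∀ k, k < m → (u k) ⊓ w = 0) : (∑ k ∈ Finset.range m, u k) ⊓ w = 0 := by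
  induction m with
  | zero => simpa using inf_of_le_left hw
  | succ m ih =>
    rw [Finset.sum_range_succ]
    exact aux_disj_add (Finset.sum_nonneg fun k _ => hu k) (hu m) hw
      (ih fun k hk => h k (Nat.lt_succ_of_lt hk)) (h m (Nat.lt_succ_self m))

lemma aux_abs_sum (v : ℕ → Y) (hv : ∀ n, 0 ≤ v n) (hd : ∀ n m, n ≠ m → v n ⊓ v m = 0)
    (a : ℕ → ℝ) (m : ℕ) :
    |∑ k ∈ Finset.range m, a k • v k| = ∑ k ∈ Finset.range m, |a k| • v k := by
  induction m with
  | zero => simp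
  | succ m ih =>
    rw [Finset.sum_range_succ, Finset.sum_range_succ, ← ih, ← aux_abs_smul (hv m) (a m)]
    refine aux_abs_add_disj ?_
    rw [ih, aux_abs_smul (hv m) (a m)]
    refine aux_sum_disj (fun k => aux_smul_nonneg (hv k) (abs_nonneg _))
      (aux_smul_nonneg (hv m) (abs_nonneg _)) (fun k hk => ?_)
    exact aux_smul_disj (hv k) (hv m) (hd k m (Nat.ne_of_lt hk)) (abs_nonneg _) (abs_nonneg _)

end AuxLemmas

/-- A norm bounded disjoint positive sequence in a Banach lattice is weakly
null iff no subsequence is equivalent to the unit vector basis of `ℓ¹`. -/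
theorem stmt0 {X : Type*} [NormedAddCommGroup X] [Lattice X] [HasSolidNorm X] [IsOrderedAddMonoid X] [NormedSpace ℝ X] [CompleteSpace X]
    (f : ℕ → X) (hpos : ∀ n, 0 ≤ f n) (hbdd : ∃ M : ℝ, ∀ n, ‖f n‖ ≤ M)
    (hdisj : ∀ n m, n ≠ m → f n ⊓ f m = 0) :
    WeaklyNull f ↔ ¬ ∃ φ : ℕ → ℕ, StrictMono φ ∧ IsL1Basic (f ∘ φ) := by
  constructor
  · rintro hw ⟨φ, hφ, M, hMpos, hest⟩
    classical
    set s : Set X := convexHull ℝ (Set.range (f ∘ φ)) with hs_def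
    have hlow : ∀ x ∈ s, 1 / M ≤ ‖x‖ := by
      intro x hx
      rw [hs_def, convexHull_eq] at hx
      obtain ⟨ι, t, w, z, hw0, hw1, hz, rfl⟩ := hx
      have hzn : ∀ i : ι, ∃ k : ℕ, i ∈ t → f (φ k) = z i := by
        intro i
        by_cases hi : i ∈ t
        · obtain ⟨k, hk⟩ := hz i hi
          exact ⟨k, fun _ => hk⟩
        · exact ⟨0, fun h => absurd h hi⟩
      choose n hn using hzn
      set m : ℕ := t.sup n + 1 with hm_def
      have hmaps : ∀ i ∈ t, n i ∈ Finset.range m :=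
        fun i hi => Finset.mem_range.2 (Nat.lt_succ_of_le (Finset.le_sup hi))
      set a : ℕ → ℝ := fun k => ∑ i ∈ t.filter (fun i => n i = k), w i with ha_def
      have ha0 : ∀ k, 0 ≤ a k := by
        intro k
        exact Finset.sum_nonneg fun i hi => hw0 i (Finset.mem_filter.1 hi).1
      have hcm : t.centerMass w z = ∑ i ∈ t, w i • z i := Finset.centerMass_eq_of_sum_1 t z hw1
      have hxeq : t.centerMass w z = ∑ k ∈ Finset.range m, a k • f (φ k) := by
        rw [hcm, ← Finset.sum_fiberwise_of_maps_to hmaps (fun i => w i • z i)]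
        refine Finset.sum_congr rfl fun k _ => ?_
        rw [ha_def, Finset.sum_smul]
        refine Finset.sum_congr rfl fun i hi => ?_
        obtain ⟨hit, hik⟩ := Finset.mem_filter.1 hi
        rw [← hn i hit, hik]
      have hsum1 : ∑ k ∈ Finset.range m, |a k| = 1 := by
        have : ∑ k ∈ Finset.range m, a k = 1 := by
          rw [ha_def]
          rw [Finset.sum_fiberwise_of_maps_to hmaps w]
          exact hw1
        rw [← this]
        exact Finset.sum_congr rfl fun k _ => abs_of_nonneg (ha0 k)
      have := hest m a
      simp only [Function.comp] at this
      rw [hsum1, mul_one] at this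
      rw [hxeq]
      exact this
    have h0 : (0 : X) ∉ closure s := by
      intro h0
      have hMinv : 0 < 1 / M := by positivity
      obtain ⟨y, hy, hdy⟩ := Metric.mem_closure_iff.1 h0 (1 / M) hMinv
      have : ‖y‖ < 1 / M := by
        have : dist (0 : X) y = ‖y‖ := by rw [dist_eq_norm, zero_sub, norm_neg]
        linarith [this ▸ hdy]
      linarith [hlow y hy]
    obtain ⟨g, u, hgu, hgs⟩ :=
      geometric_hahn_banach_point_closed ((convex_convexHull ℝ _).closure) isClosed_closure h0
    have hg0 : g 0 = 0 := map_zero g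
    have hu : 0 < u := by rw [hg0] at hgu; exact hgu
    have hten : Tendsto (fun n => g (f (φ n))) atTop (𝓝 0) := (hw g).comp hφ.tendsto_atTop
    have hev : ∀ᶠ n in atTop, g (f (φ n)) < u := hten.eventually (Filter.Tendsto.eventually_lt_const hu tendsto_id) |>.mono (fun n hn => hn)
    obtain ⟨n, hn⟩ := hev.exists
    have hmem : f (φ n) ∈ closure s :=
      subset_closure (subset_convexHull ℝ _ ⟨n, rfl⟩)
    exact absurd (hgs _ hmem) (not_lt.2 hn.le)
  · intro hno g
    by_contra hg
    rw [Metric.tendsto_atTop] at hg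
    push_neg at hg
    obtain ⟨ε, hε, hfreq⟩ := hg
    have hinf : {n | ε ≤ |g (f n)|}.Infinite := by
      rw [← Nat.frequently_atTop_iff_infinite]
      rw [Filter.frequently_atTop]
      intro N
      obtain ⟨n, hnN, hn⟩ := hfreq N
      refine ⟨n, hnN, ?_⟩
      rwa [Real.dist_eq, sub_zero] at hn
    have hsplit : {n | ε ≤ g (f n)}.Infinite ∨ {n | ε ≤ -g (f n)}.Infinite := by
      rw [← Set.infinite_union]
      refine hinf.mono fun n hn => ?_
      rcases abs_cases (g (f n)) with ⟨h1, _⟩ | ⟨h1, _⟩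
      · left; rw [Set.mem_setOf_eq]; rw [Set.mem_setOf_eq, h1] at hn; exact hn
      · right; rw [Set.mem_setOf_eq]; rw [Set.mem_setOf_eq, h1] at hn; exact hn
    obtain ⟨g', S, hSinf, hS⟩ : ∃ (g' : X →L[ℝ] ℝ) (S : Set ℕ), S.Infinite ∧
        ∀ n ∈ S, ε ≤ g' (f n) := by
      rcases hsplit with h | h
      · exact ⟨g, _, h, fun n hn => hn⟩
      · exact ⟨-g, _, h, fun n hn => by simpa using hn⟩
    set ψ : ℕ → ℕ := Nat.nth (· ∈ S) with hψ_def
    have hSinf' : (setOf (· ∈ S)).Infinite := hSinf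
    have hψ : StrictMono ψ := Nat.nth_strictMono hSinf'
    have hmem : ∀ k, ε ≤ g' (f (ψ k)) := fun k => hS _ (Nat.nth_mem_of_infinite hSinf' k)
    have hgpos : 0 < ‖g'‖ := by
      rcases eq_or_lt_of_le (norm_nonneg g') with h | h
      · exfalso
        have h0 : g' = 0 := by rw [← norm_eq_zero]; exact h.symm
        have h1 := hmem 0
        rw [h0] at h1
        simp at h1
        linarith
      · exact h
    apply hno
    refine ⟨ψ, hψ, ‖g'‖ / ε, by positivity, fun m a => ?_⟩
    have hdψ : ∀ n k, n ≠ k → f (ψ n) ⊓ f (ψ k) = 0 :=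
      fun n k hnk => hdisj _ _ (fun h => hnk (hψ.injective h))
    have habs : |∑ k ∈ Finset.range m, a k • f (ψ k)| = ∑ k ∈ Finset.range m, |a k| • f (ψ k) :=
      aux_abs_sum (fun k => f (ψ k)) (fun k => hpos _) hdψ a m
    have hnorm : ‖∑ k ∈ Finset.range m, a k • (f ∘ ψ) k‖ =
        ‖∑ k ∈ Finset.range m, |a k| • f (ψ k)‖ := by
      rw [← norm_abs_eq_norm (∑ k ∈ Finset.range m, a k • (f ∘ ψ) k)]
      simp only [Function.comp]
      rw [habs]
    have hg'sum : ε * ∑ k ∈ Finset.range m, |a k| ≤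
        g' (∑ k ∈ Finset.range m, |a k| • f (ψ k)) := by
      rw [map_sum, Finset.mul_sum]
      refine Finset.sum_le_sum fun k _ => ?_
      rw [map_smul, smul_eq_mul, mul_comm ε]
      exact mul_le_mul_of_nonneg_left (hmem k) (abs_nonneg _)
    have hg'le : g' (∑ k ∈ Finset.range m, |a k| • f (ψ k)) ≤
        ‖g'‖ * ‖∑ k ∈ Finset.range m, |a k| • f (ψ k)‖ :=
      le_trans (le_abs_self _) (g'.le_opNorm _)
    have hkey : ε * ∑ k ∈ Finset.range m, |a k| ≤
        ‖g'‖ * ‖∑ k ∈ Finset.range m, a k • (f ∘ ψ) k‖ := by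
      rw [hnorm]; linarith
    rw [one_div_div, div_mul_eq_mul_div, div_le_iff₀ hgpos, mul_comm ε, mul_comm _ ‖g'‖]
    rw [mul_comm ε] at hkey
    linarith
end
end

section
/- Let X be a Banach lattice and (f_n) a norm bounded disjoint sequence in X₊ equivalent to the unit vector basis of ℓ¹. Then 0 does not belong to the order closure of the convex hull of {f_n : n ∈ ℕ}. -/
open Filter Topology Pointwise

noncomputable section

variable {X : Type*} [NormedAddCommGroup X] [Lattice X] [IsOrderedAddMonoid X] [HasSolidNorm X] [NormedSpace ℝ X]

variable (X)

variable {X}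

lemma aux_half (z : X) (h : 0 ≤ z + z) : 0 ≤ z := by
  have h2 : -z ≤ z := sub_nonneg.mp (by rwa [sub_neg_eq_add])
  have h3 : z⁻ ≤ z⁺ := by
    rw [negPart_def, posPart_def]; exact sup_le_sup_right h2 0
  have h4 : z⁻ = 0 := by rw [← posPart_inf_negPart_eq_zero z, inf_eq_right.mpr h3]
  exact negPart_eq_zero.mp h4

lemma aux_smul_nonneg_s2 {c : ℝ} (hc : 0 ≤ c) {x : X} (hx : 0 ≤ x) : 0 ≤ c • x := by
  have step1 : ∀ m : ℕ, 0 ≤ ((2:ℝ)⁻¹) ^ m • x := by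
    intro m
    induction m with
    | zero => simpa using hx
    | succ m ih =>
      apply aux_half
      have : ((2:ℝ)⁻¹) ^ (m+1) • x + ((2:ℝ)⁻¹) ^ (m+1) • x
          = ((2:ℝ)⁻¹) ^ m • x := by
        rw [← two_smul ℝ, smul_smul]
        congr 1
        rw [pow_succ]; ring
      rwa [this]
  have step2 : ∀ (n m : ℕ), 0 ≤ ((n : ℝ) * ((2:ℝ)⁻¹) ^ m) • x := by
    intro n m
    rw [mul_smul, Nat.cast_smul_eq_nsmul]
    exact nsmul_nonneg (step1 m) n
  -- approximate c by dyadics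
  set t : ℕ → ℝ := fun j => (⌊c * 2 ^ j⌋₊ : ℝ) * ((2:ℝ)⁻¹) ^ j with ht
  have h2j : ∀ j : ℕ, (0:ℝ) < 2 ^ j := fun j => by positivity
  have hub : ∀ j, t j ≤ c := by
    intro j
    have h1 : (⌊c * 2 ^ j⌋₊ : ℝ) ≤ c * 2 ^ j := Nat.floor_le (by positivity)
    calc t j ≤ (c * 2 ^ j) * ((2:ℝ)⁻¹) ^ j := by
          apply mul_le_mul_of_nonneg_right h1 (by positivity)
      _ = c := by rw [inv_pow]; field_simp
  have hlb : ∀ j, c - ((2:ℝ)⁻¹) ^ j ≤ t j := by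
    intro j
    have h1 : c * 2 ^ j - 1 < (⌊c * 2 ^ j⌋₊ : ℝ) := Nat.sub_one_lt_floor _
    have := mul_le_mul_of_nonneg_right h1.le (le_of_lt (by positivity : (0:ℝ) < ((2:ℝ)⁻¹) ^ j))
    calc c - ((2:ℝ)⁻¹) ^ j = (c * 2 ^ j - 1) * ((2:ℝ)⁻¹) ^ j := by
          rw [inv_pow]; field_simp
      _ ≤ t j := this
  have htend : Tendsto t atTop (𝓝 c) := by
    apply tendsto_of_tendsto_of_tendsto_of_le_of_le (g := fun j => c - ((2:ℝ)⁻¹) ^ j)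
      (h := fun _ => c) _ tendsto_const_nhds hlb hub
    have : Tendsto (fun j : ℕ => ((2:ℝ)⁻¹) ^ j) atTop (𝓝 0) :=
      tendsto_pow_atTop_nhds_zero_of_lt_one (by norm_num) (by norm_num)
    simpa using tendsto_const_nhds.sub this
  have htend2 : Tendsto (fun j => t j • x) atTop (𝓝 (c • x)) := htend.smul_const x
  have hmem : ∀ j, t j • x ∈ Set.Ici (0 : X) := fun j => step2 _ j
  exact isClosed_Ici.mem_of_tendsto htend2 (Filter.Eventually.of_forall hmem)

lemma aux_smul_le {a b : ℝ} (hab : a ≤ b) {x : X} (hx : 0 ≤ x) : a • x ≤ b • x := by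
  have := aux_smul_nonneg_s2 (sub_nonneg.mpr hab) hx
  rw [sub_smul] at this
  exact sub_nonneg.mp this

lemma aux_smul_mono {c : ℝ} (hc : 0 ≤ c) {x y : X} (hxy : x ≤ y) : c • x ≤ c • y := by
  have := aux_smul_nonneg_s2 hc (sub_nonneg.mpr hxy)
  rw [smul_sub] at this
  exact sub_nonneg.mp this

lemma aux_smul_inf {c : ℝ} (hc : 0 < c) (x y : X) : c • (x ⊓ y) = c • x ⊓ c • y := by
  apply le_antisymm
  · exact le_inf (aux_smul_mono hc.le inf_le_left) (aux_smul_mono hc.le inf_le_right)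
  · have h1 : c⁻¹ • (c • x ⊓ c • y) ≤ x ⊓ y := by
      apply le_inf
      · calc c⁻¹ • (c • x ⊓ c • y) ≤ c⁻¹ • (c • x) :=
            aux_smul_mono (by positivity) inf_le_left
          _ = x := inv_smul_smul₀ hc.ne' x
      · calc c⁻¹ • (c • x ⊓ c • y) ≤ c⁻¹ • (c • y) :=
            aux_smul_mono (by positivity) inf_le_right
          _ = y := inv_smul_smul₀ hc.ne' y
    calc c • x ⊓ c • y = c • (c⁻¹ • (c • x ⊓ c • y)) := (smul_inv_smul₀ hc.ne' _).symm
      _ ≤ c • (x ⊓ y) := aux_smul_mono hc.le h1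

lemma aux_disj {a b : ℝ} (ha : 0 ≤ a) (hb : 0 ≤ b) {x y : X} (hx : 0 ≤ x) (hy : 0 ≤ y)
    (h : x ⊓ y = 0) : (a • x) ⊓ (b • y) = 0 := by
  set c := max a b with hcdef
  have hc0 : 0 ≤ c := le_trans ha (le_max_left a b)
  apply le_antisymm
  · rcases hc0.eq_or_lt with hc | hc
    · have ha0 : a = 0 := le_antisymm (hc ▸ le_max_left a b) ha
      simp [ha0]
    · calc (a • x) ⊓ (b • y) ≤ (c • x) ⊓ (c • y) :=
          inf_le_inf (aux_smul_le (le_max_left a b) hx) (aux_smul_le (le_max_right a b) hy)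
        _ = c • (x ⊓ y) := (aux_smul_inf hc x y).symm
        _ = 0 := by rw [h, smul_zero]
  · exact le_inf (aux_smul_nonneg_s2 ha hx) (aux_smul_nonneg_s2 hb hy)

lemma aux_add_inf {a b v : X} (ha : 0 ≤ a) (hb : 0 ≤ b) (hv : 0 ≤ v)
    (h1 : a ⊓ v = 0) (h2 : b ⊓ v = 0) : (a + b) ⊓ v = 0 := by
  apply le_antisymm
  · have e1 : a ⊓ v + b ⊓ v = ((a ⊓ v) + b) ⊓ ((a ⊓ v) + v) :=
      (OrderIso.addLeft (a ⊓ v)).map_inf b v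
    have e2 : (a ⊓ v) + b = (a + b) ⊓ (v + b) := (OrderIso.addRight b).map_inf a v
    have e3 : (a ⊓ v) + v = (a + v) ⊓ (v + v) := (OrderIso.addRight v).map_inf a v
    have key : (a + b) ⊓ v ≤ a ⊓ v + b ⊓ v := by
      rw [e1, e2, e3]
      refine le_inf (le_inf inf_le_left ?_) (le_inf ?_ ?_)
      · exact le_add_of_le_of_nonneg inf_le_right hb
      · exact inf_le_right.trans (le_add_of_nonneg_left ha)
      · exact le_add_of_le_of_nonneg inf_le_right hv
    calc (a + b) ⊓ v ≤ a ⊓ v + b ⊓ v := key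
      _ = 0 := by rw [h1, h2, add_zero]
  · exact le_inf (add_nonneg ha hb) hv

lemma aux_sum_inf (s : Finset ℕ) (u : ℕ → X) (v : X) (hu : ∀ k, 0 ≤ u k) (hv : 0 ≤ v)
    (h : ∀ k ∈ s, u k ⊓ v = 0) : (∑ k ∈ s, u k) ⊓ v = 0 := by
  induction s using Finset.induction_on with
  | empty => simpa using inf_eq_right.mpr hv
  | insert k s' hns ih =>
    rw [Finset.sum_insert hns]
    exact aux_add_inf (hu k) (Finset.sum_nonneg fun l _ => hu l) hv
      (h k (Finset.mem_insert_self k s'))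
      (ih fun l hl => h l (Finset.mem_insert_of_mem hl))

lemma aux_sum_le (s : Finset ℕ) (u : ℕ → X) (hu : ∀ k, 0 ≤ u k)
    (hd : ∀ k l, k ≠ l → u k ⊓ u l = 0) (H : X) (hH0 : 0 ≤ H)
    (hH : ∀ k ∈ s, u k ≤ H) : ∑ k ∈ s, u k ≤ H := by
  induction s using Finset.induction_on with
  | empty => simpa using hH0
  | insert k s' hns ih =>
    rw [Finset.sum_insert hns]
    have d : u k ⊓ (∑ l ∈ s', u l) = 0 := by
      rw [inf_comm]
      exact aux_sum_inf s' u (u k) hu (hu k)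
        (fun l hl => hd l k (fun he => hns (he ▸ hl)))
    have e : u k + ∑ l ∈ s', u l = u k ⊔ ∑ l ∈ s', u l := by
      rw [← inf_add_sup, d, zero_add]
    rw [e]
    exact sup_le (hH k (Finset.mem_insert_self k s'))
      (ih fun l hl => hH l (Finset.mem_insert_of_mem hl))

lemma aux_rep (f : ℕ → X) (x : X) (hx : x ∈ convexHull ℝ (Set.range f)) :
    ∃ (m : ℕ) (a : ℕ → ℝ), (∀ k, 0 ≤ a k) ∧ (∀ k, m ≤ k → a k = 0) ∧
      (∑ k ∈ Finset.range m, a k) = 1 ∧ (∑ k ∈ Finset.range m, a k • f k) = x := by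
  set S : Set X := {x | ∃ (m : ℕ) (a : ℕ → ℝ), (∀ k, 0 ≤ a k) ∧ (∀ k, m ≤ k → a k = 0) ∧
      (∑ k ∈ Finset.range m, a k) = 1 ∧ (∑ k ∈ Finset.range m, a k • f k) = x} with hS
  have hsub : Set.range f ⊆ S := by
    rintro _ ⟨n, rfl⟩
    refine ⟨n + 1, fun j => if j = n then 1 else 0, ?_, ?_, ?_, ?_⟩
    · intro k; simp only []; split <;> norm_num
    · intro k hk; have : k ≠ n := by omega
      simp [this]
    · simp
    · rw [Finset.sum_eq_single n]
      · simp
      · intro b _ hb; simp [hb]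
      · intro hn; exact absurd (Finset.self_mem_range_succ n) hn
  have hext : ∀ (m M : ℕ) (a : ℕ → ℝ), m ≤ M → (∀ k, m ≤ k → a k = 0) →
      (∑ k ∈ Finset.range M, a k) = (∑ k ∈ Finset.range m, a k) ∧
      (∑ k ∈ Finset.range M, a k • f k) = (∑ k ∈ Finset.range m, a k • f k) := by
    intro m M a hmM h0
    constructor
    · exact (Finset.sum_subset (Finset.range_subset_range.mpr hmM)
        (fun k _ hk => h0 k (by simpa using hk))).symm
    · exact (Finset.sum_subset (Finset.range_subset_range.mpr hmM)
        (fun k _ hk => by rw [h0 k (by simpa using hk), zero_smul])).symm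
  have hconv : Convex ℝ S := by
    rintro x ⟨m₁, a, ha0, haz, has, hax⟩ y ⟨m₂, b, hb0, hbz, hbs, hbx⟩ θ σ hθ hσ hθσ
    refine ⟨max m₁ m₂, fun k => θ * a k + σ * b k, ?_, ?_, ?_, ?_⟩
    · intro k; have := ha0 k; have := hb0 k; positivity
    · intro k hk
      simp only []
      rw [haz k (le_trans (le_max_left _ _) hk), hbz k (le_trans (le_max_right _ _) hk)]
      ring
    · rw [Finset.sum_add_distrib, ← Finset.mul_sum, ← Finset.mul_sum,
        (hext m₁ _ a (le_max_left _ _) haz).1,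
        (hext m₂ _ b (le_max_right _ _) hbz).1, has, hbs]
      simpa using hθσ
    · have : ∀ k, (θ * a k + σ * b k) • f k = θ • (a k • f k) + σ • (b k • f k) := by
        intro k; rw [add_smul, smul_smul, smul_smul]
      rw [Finset.sum_congr rfl (fun k _ => this k), Finset.sum_add_distrib,
        ← Finset.smul_sum, ← Finset.smul_sum,
        (hext m₁ _ a (le_max_left _ _) haz).2,
        (hext m₂ _ b (le_max_right _ _) hbz).2, hax, hbx]
  exact convexHull_min hsub hconv hx


lemma aux_ub (E : DirectedType) (s : Finset ℕ) (g : ℕ → E.ι) :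
    ∃ γ, ∀ k ∈ s, E.r (g k) γ := by
  classical
  induction s using Finset.induction_on with
  | empty => exact ⟨E.nonempty.some, by simp⟩
  | insert k s' hns ih =>
    obtain ⟨γ', hγ'⟩ := ih
    obtain ⟨γ'', h1, h2⟩ := E.directed (g k) γ'
    refine ⟨γ'', fun l hl => ?_⟩
    rcases Finset.mem_insert.mp hl with rfl | hl
    · exact h1
    · exact E.trans _ _ _ (hγ' l hl) h2

/-- for a norm bounded disjoint positive `ℓ¹`-sequence, `0` is not
in the order closure of the convex hull of `{fₙ}`. -/
theorem stmt2 {X : Type*} [NormedAddCommGroup X] [Lattice X] [IsOrderedAddMonoid X] [HasSolidNorm X] [NormedSpace ℝ X] [CompleteSpace X]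
    (f : ℕ → X) (hpos : ∀ n, 0 ≤ f n) (hbdd : ∃ M : ℝ, ∀ n, ‖f n‖ ≤ M)
    (hdisj : ∀ n m, n ≠ m → f n ⊓ f m = 0) (hl1 : IsL1Basic f) :
    (0 : X) ∉ OrderClosure (convexHull ℝ (Set.range f)) := by
  obtain ⟨M, hM, hl1⟩ := hl1
  have normf : ∀ k, 1 / M ≤ ‖f k‖ := by
    intro k
    have h := hl1 (k + 1) (fun j => if j = k then 1 else 0)
    have e1 : ∑ j ∈ Finset.range (k+1), |if j = k then (1:ℝ) else 0| = 1 := by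
      rw [Finset.sum_eq_single k]
      · simp
      · intro b _ hb; simp [hb]
      · intro hn; exact absurd (Finset.self_mem_range_succ k) hn
    have e2 : ∑ j ∈ Finset.range (k+1), (if j = k then (1:ℝ) else 0) • f j = f k := by
      rw [Finset.sum_eq_single k]
      · simp
      · intro b _ hb; simp [hb]
      · intro hn; exact absurd (Finset.self_mem_range_succ k) hn
    rw [e1, e2, mul_one] at h
    exact h
  intro hmem
  obtain ⟨D, x, hxC, E, h, hdec, hglb, hdom⟩ := hmem
  have hc : ∀ γ : E.ι, ∃ z, z ∈ convexHull ℝ (Set.range f) ∧ |z - 0| ≤ h γ := by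
    intro γ
    obtain ⟨i₀, hi₀⟩ := hdom γ
    exact ⟨x i₀, hxC i₀, hi₀ i₀ (D.refl i₀)⟩
  choose c hcC hch0 using hc
  choose m a ha0 haz has hax using fun γ => aux_rep f (c γ) (hcC γ)
  have hcpos : ∀ γ, 0 ≤ c γ := by
    intro γ
    rw [← hax γ]
    exact Finset.sum_nonneg fun k _ => aux_smul_nonneg_s2 (ha0 γ k) (hpos k)
  have hch : ∀ γ, c γ ≤ h γ := by
    intro γ
    have := hch0 γ
    rwa [sub_zero, abs_of_nonneg (hcpos γ)] at this
  have h0 : ∀ γ, 0 ≤ h γ := fun γ => hglb.1 ⟨γ, rfl⟩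
  have key0 : ∀ γ k, a γ k • f k ≤ c γ := by
    intro γ k
    by_cases hk : k < m γ
    · rw [← hax γ]
      exact Finset.single_le_sum (f := fun l => a γ l • f l)
        (fun l _ => aux_smul_nonneg_s2 (ha0 γ l) (hpos l)) (Finset.mem_range.mpr hk)
    · rw [haz γ k (not_lt.mp hk), zero_smul]; exact hcpos γ
  obtain ⟨γ₀⟩ := E.nonempty
  have key1 : ∀ γ, E.r γ₀ γ → ∀ k, a γ k • f k ≤ h γ₀ :=
    fun γ hγ k => (key0 γ k).trans ((hch γ).trans (hdec γ₀ γ hγ))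
  have boundA : ∀ (N : ℕ) (A : ℕ → ℝ), (∀ k, 0 ≤ A k) → (∀ k, A k • f k ≤ h γ₀) →
      ∑ k ∈ Finset.range N, A k ≤ M * ‖h γ₀‖ := by
    intro N A hA0 hAle
    have hS : ∑ k ∈ Finset.range N, A k • f k ≤ h γ₀ :=
      aux_sum_le _ _ (fun k => aux_smul_nonneg_s2 (hA0 k) (hpos k))
        (fun k l hkl => aux_disj (hA0 k) (hA0 l) (hpos k) (hpos l) (hdisj k l hkl))
        _ (h0 γ₀) (fun k _ => hAle k)
    have hS0 : 0 ≤ ∑ k ∈ Finset.range N, A k • f k :=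
      Finset.sum_nonneg fun k _ => aux_smul_nonneg_s2 (hA0 k) (hpos k)
    have hnorm : ‖∑ k ∈ Finset.range N, A k • f k‖ ≤ ‖h γ₀‖ :=
      norm_le_norm_of_abs_le_abs (by rwa [abs_of_nonneg hS0, abs_of_nonneg (h0 γ₀)])
    have hle := (hl1 N A).trans hnorm
    have e : ∑ k ∈ Finset.range N, |A k| = ∑ k ∈ Finset.range N, A k :=
      Finset.sum_congr rfl fun k _ => abs_of_nonneg (hA0 k)
    rw [e] at hle
    have hmul := mul_le_mul_of_nonneg_left hle hM.le
    rw [← mul_assoc, mul_one_div, div_self hM.ne', one_mul] at hmul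
    exact hmul
  by_cases hN : ∃ N, ∀ γ, E.r γ₀ γ → 1/2 ≤ ∑ k ∈ Finset.range N, a γ k
  · obtain ⟨N, hNs⟩ := hN
    have hN1 : 0 < N := by
      rcases Nat.eq_zero_or_pos N with rfl | hp
      · have := hNs γ₀ (E.refl γ₀)
        norm_num at this
      · exact hp
    have hNR : (0:ℝ) < N := by exact_mod_cast hN1
    have hpig : ∀ γ, E.r γ₀ γ → ∃ k, k < N ∧ 1/(2*(N:ℝ)) ≤ a γ k := by
      intro γ hγ
      by_contra hcon
      push_neg at hcon
      have hlt : ∑ k ∈ Finset.range N, a γ k <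
          ∑ _k ∈ Finset.range N, (1/(2*(N:ℝ))) := by
        apply Finset.sum_lt_sum_of_nonempty ⟨0, Finset.mem_range.mpr hN1⟩
        intro k hk
        exact hcon k (Finset.mem_range.mp hk)
      have he : (N:ℝ) * (1/(2*(N:ℝ))) = 1/2 := by field_simp
      rw [Finset.sum_const, Finset.card_range, nsmul_eq_mul, he] at hlt
      have := hNs γ hγ
      linarith
    have hcof : ∃ k, k < N ∧ ∀ γ, ∃ γ', E.r γ γ' ∧ E.r γ₀ γ' ∧ 1/(2*(N:ℝ)) ≤ a γ' k := by
      by_contra hcon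
      push_neg at hcon
      have hcon' : ∀ k : ℕ, ∃ γ, ∀ γ', E.r γ γ' → E.r γ₀ γ' →
          k < N → a γ' k < 1/(2*(N:ℝ)) := by
        intro k
        by_cases hk : k < N
        · obtain ⟨γ, hγ⟩ := hcon k hk
          exact ⟨γ, fun γ' h1 h2 _ => hγ γ' h1 h2⟩
        · exact ⟨γ₀, fun γ' _ _ hkN => absurd hkN hk⟩
      choose g hg using hcon'
      obtain ⟨γ₁, hγ₁⟩ := aux_ub E (Finset.range N) g
      obtain ⟨γs, hst1, hst2⟩ := E.directed γ₀ γ₁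
      obtain ⟨k, hkN, hka⟩ := hpig γs hst1
      exact absurd hka (not_le.mpr
        (hg k γs (E.trans _ _ _ (hγ₁ k (Finset.mem_range.mpr hkN)) hst2) hst1 hkN))
    obtain ⟨k, hkN, hkcof⟩ := hcof
    set w := (1/(2*(N:ℝ))) • f k with hw
    have hwlb : ∀ γ, w ≤ h γ := by
      intro γ
      obtain ⟨γ', h1, _h2, h3⟩ := hkcof γ
      calc w ≤ a γ' k • f k := aux_smul_le h3 (hpos k)
        _ ≤ c γ' := key0 γ' k
        _ ≤ h γ' := hch γ'
        _ ≤ h γ := hdec γ γ' h1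
    have hw0 : w ≤ 0 := hglb.2 (by rintro _ ⟨γ, rfl⟩; exact hwlb γ)
    have hw0' : 0 ≤ w := aux_smul_nonneg_s2 (by positivity) (hpos k)
    have hweq : w = 0 := le_antisymm hw0 hw0'
    have hnw : ‖w‖ = |1/(2*(N:ℝ))| * ‖f k‖ := by
      rw [hw, norm_smul, Real.norm_eq_abs]
    rw [hweq, norm_zero] at hnw
    have habs : |1/(2*(N:ℝ))| = 1/(2*(N:ℝ)) := abs_of_pos (by positivity)
    rw [habs] at hnw
    have hfk : 0 < ‖f k‖ := lt_of_lt_of_le (by positivity) (normf k)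
    have : (0:ℝ) < 1/(2*(N:ℝ)) * ‖f k‖ := by positivity
    linarith
  · push_neg at hN
    choose g hg1 hg2 using hN
    have ind : ∀ J : ℕ, ∃ (N : ℕ) (A : ℕ → ℝ), (∀ k, 0 ≤ A k) ∧
        (∀ k, A k • f k ≤ h γ₀) ∧ (J : ℝ)/2 ≤ ∑ k ∈ Finset.range N, A k := by
      intro J
      induction J with
      | zero =>
        exact ⟨0, fun _ => 0, fun _ => le_refl 0,
          fun k => by simpa using h0 γ₀, by simp⟩
      | succ J ih =>
        obtain ⟨N, A, hA0, hAle, hAs⟩ := ih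
        set γ := g N with hγdef
        have hγ0 : E.r γ₀ γ := hg1 N
        set N' := max N (m γ) with hN'def
        have hNN' : N ≤ N' := le_max_left _ _
        refine ⟨N', fun k => if k < N then A k else a γ k, ?_, ?_, ?_⟩
        · intro k
          simp only []
          split
          · exact hA0 k
          · exact ha0 γ k
        · intro k
          by_cases hk : k < N
          · simpa [hk] using hAle k
          · simpa [hk] using key1 γ hγ0 k
        · have hsplit : ∑ k ∈ Finset.range N', (if k < N then A k else a γ k) =
              ∑ k ∈ Finset.range N, A k + ∑ k ∈ Finset.Ico N N', a γ k := by
            rw [Finset.range_eq_Ico,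
              ← Finset.sum_Ico_consecutive _ (Nat.zero_le N) hNN']
            congr 1
            · rw [← Finset.range_eq_Ico]
              exact Finset.sum_congr rfl fun k hk => if_pos (Finset.mem_range.mp hk)
            · exact Finset.sum_congr rfl fun k hk =>
                if_neg (not_lt.mpr (Finset.mem_Ico.mp hk).1)
          have hsum1 : ∑ k ∈ Finset.range N', a γ k = 1 := by
            rw [← has γ]
            exact (Finset.sum_subset (Finset.range_subset_range.mpr (le_max_right _ _))
              (fun k _ hk => haz γ k (by simpa using hk))).symm
          have hIco : ∑ k ∈ Finset.Ico N N', a γ k =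
              ∑ k ∈ Finset.range N', a γ k - ∑ k ∈ Finset.range N, a γ k := by
            rw [Finset.range_eq_Ico,
              ← Finset.sum_Ico_consecutive _ (Nat.zero_le N) hNN']
            rw [← Finset.range_eq_Ico]
            ring
          have hg2N := hg2 N
          rw [hsplit, hIco, hsum1]
          push_cast
          linarith
    obtain ⟨J, hJ⟩ := exists_nat_gt (2 * (M * ‖h γ₀‖))
    obtain ⟨N, A, hA0, hAle, hAs⟩ := ind J
    have := boundA N A hA0 hAle
    linarith
end
end

section
/- A σ-Dedekind complete Banach lattice X is order continuous if and only if for every convex set C ⊆ X, the order closure of C equals the σ(X, X_n^~)-closure of C, where X_n^~ is the order continuous dual. -/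
open Filter Topology Pointwise

noncomputable section

variable {X : Type*} [NormedAddCommGroup X] [Lattice X] [HasSolidNorm X] [IsOrderedAddMonoid X]
  [NormedSpace ℝ X]

variable (X)

section Stmt3Aux
variable {X}

/-- Any finite set in a directed type has an upper bound. -/
lemma DirectedType.exists_finset_ub (D : DirectedType) (s : Finset D.ι) :
    ∃ j, ∀ i ∈ s, D.r i j := by
  classical
  induction s using Finset.induction_on with
  | empty =>
    obtain ⟨j⟩ := D.nonempty
    exact ⟨j, by simp⟩
  | @insert a s _ ih =>
    obtain ⟨j, hj⟩ := ih
    obtain ⟨k, hk1, hk2⟩ := D.directed a j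
    refine ⟨k, ?_⟩
    intro i hi
    rcases Finset.mem_insert.mp hi with rfl | hi
    · exact hk1
    · exact D.trans _ _ _ (hj i hi) hk2

lemma stmt3_aux_add_inf (x y z : X) : x + y ⊓ z = (x + y) ⊓ (x + z) := by
  refine le_antisymm (le_inf (add_le_add_right inf_le_left x) (add_le_add_right inf_le_right x)) ?_
  rw [← sub_le_iff_le_add']
  exact le_inf (sub_le_iff_le_add'.mpr inf_le_left) (sub_le_iff_le_add'.mpr inf_le_right)

lemma stmt3_aux_inf_add_le {a b c : X} (ha : 0 ≤ a) (hb : 0 ≤ b) (hc : 0 ≤ c) :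
    b ⊓ (a + c) ≤ b ⊓ a + b ⊓ c := by
  have h1 : b ⊓ (a + c) ≤ b ⊓ a + b := le_trans inf_le_left (le_add_of_nonneg_left (le_inf hb ha))
  have h2 : b ⊓ (a + c) ≤ b ⊓ a + c := by
    have e : b ⊓ a + c = (b + c) ⊓ (a + c) := by
      rw [add_comm (b ⊓ a) c, stmt3_aux_add_inf, add_comm c b, add_comm c a]
    rw [e]
    exact le_inf (le_trans inf_le_left (le_add_of_nonneg_right hc)) inf_le_right
  have := le_inf h1 h2
  rwa [← stmt3_aux_add_inf] at this

lemma stmt3_aux_inf_nsmul_eq_zero {a b : X} (ha : 0 ≤ a) (hb : 0 ≤ b)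
    (hd : b ⊓ a = 0) : ∀ n : ℕ, b ⊓ n • a = 0 := by
  intro n
  induction n with
  | zero => simpa using inf_eq_right.mpr hb
  | succ n ih =>
    refine le_antisymm ?_ (le_inf hb (nsmul_nonneg ha _))
    calc b ⊓ (n + 1) • a = b ⊓ (n • a + a) := by rw [succ_nsmul]
      _ ≤ b ⊓ (n • a) + b ⊓ a := stmt3_aux_inf_add_le (nsmul_nonneg ha n) hb ha
      _ = 0 := by rw [ih, hd, add_zero]

lemma stmt3_aux_nonneg_of_nsmul {y : X} {n : ℕ} (h : 0 ≤ (n + 1) • y) : 0 ≤ y := by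
  have hy : y⁺ - y⁻ = y := posPart_sub_negPart y
  have hsub : (n + 1) • y = (n + 1) • y⁺ - (n + 1) • y⁻ := by rw [← nsmul_sub, hy]
  have h1 : (n + 1) • y⁻ ≤ (n + 1) • y⁺ := by
    rw [hsub, sub_nonneg] at h; exact h
  have h2 : y⁻ ≤ (n + 1) • y⁻ := by
    rw [succ_nsmul]
    exact le_add_of_nonneg_left (nsmul_nonneg (negPart_nonneg y) n)
  have h3 : y⁻ ≤ (n + 1) • y⁺ := h2.trans h1
  have h4 : y⁻ = y⁻ ⊓ ((n + 1) • y⁺) := (inf_eq_left.mpr h3).symm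
  rw [stmt3_aux_inf_nsmul_eq_zero (posPart_nonneg y) (negPart_nonneg y)
      (by rw [inf_comm]; exact posPart_inf_negPart_eq_zero y) (n + 1)] at h4
  exact negPart_eq_zero.mp h4

lemma stmt3_aux_smul_nonneg {r : ℝ} {x : X} (hr : 0 ≤ r) (hx : 0 ≤ x) : 0 ≤ r • x := by
  have key : ∀ (k n : ℕ), 0 ≤ ((k : ℝ) / ((n : ℝ) + 1)) • x := by
    intro k n
    have hn : ((n : ℝ) + 1) ≠ 0 := by positivity
    set y : X := (((n : ℝ) + 1)⁻¹) • x with hy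
    have hny : (n + 1) • y = x := by
      rw [hy, ← Nat.cast_smul_eq_nsmul ℝ, smul_smul]
      push_cast
      rw [mul_inv_cancel₀ hn, one_smul]
    have hy0 : 0 ≤ y := stmt3_aux_nonneg_of_nsmul (n := n) (by rw [hny]; exact hx)
    have hkx : ((k : ℝ) / ((n : ℝ) + 1)) • x = k • y := by
      rw [← Nat.cast_smul_eq_nsmul ℝ, hy, smul_smul, div_eq_mul_inv]
    rw [hkx]
    exact nsmul_nonneg hy0 k
  set q : ℕ → ℝ := fun n => (⌊r * ((n : ℝ) + 1)⌋₊ : ℝ) / ((n : ℝ) + 1) with hq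
  have hq_tend : Filter.Tendsto q Filter.atTop (nhds r) := by
    have hbound : ∀ n : ℕ, |q n - r| ≤ 1 / ((n : ℝ) + 1) := by
      intro n
      have hn : (0 : ℝ) < (n : ℝ) + 1 := by positivity
      have h1 : (⌊r * ((n : ℝ) + 1)⌋₊ : ℝ) ≤ r * ((n : ℝ) + 1) :=
        Nat.floor_le (by positivity)
      have h2 : r * ((n : ℝ) + 1) < (⌊r * ((n : ℝ) + 1)⌋₊ : ℝ) + 1 :=
        Nat.lt_floor_add_one _
      have e : q n - r = ((⌊r * ((n : ℝ) + 1)⌋₊ : ℝ) - r * ((n : ℝ) + 1)) / ((n : ℝ) + 1) := by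
        rw [hq]
        field_simp
      rw [e, abs_div, abs_of_pos hn]
      gcongr
      rw [abs_le]
      constructor <;> nlinarith
    have h0 : Filter.Tendsto (fun n : ℕ => q n - r) Filter.atTop (nhds 0) := by
      exact squeeze_zero_norm (fun n => by rw [Real.norm_eq_abs]; exact hbound n)
        tendsto_one_div_add_atTop_nhds_zero_nat
    have := h0.add_const r
    simpa using this
  have hcont : Filter.Tendsto (fun n : ℕ => q n • x) Filter.atTop (nhds (r • x)) :=
    hq_tend.smul_const x
  refine isClosed_nonneg.mem_of_tendsto hcont (Filter.Eventually.of_forall fun n => ?_)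
  exact key _ _

lemma stmt3_aux_smul_le_smul {r : ℝ} {a b : X} (hr : 0 ≤ r) (h : a ≤ b) : r • a ≤ r • b := by
  have := stmt3_aux_smul_nonneg hr (sub_nonneg.mpr h)
  rwa [smul_sub, sub_nonneg] at this

lemma stmt3_aux_smul_le_smul_coeff {r s : ℝ} {u : X} (h : r ≤ s) (hu : 0 ≤ u) :
    r • u ≤ s • u := by
  have := stmt3_aux_smul_nonneg (sub_nonneg.mpr h) hu
  rwa [sub_smul, sub_nonneg] at this

lemma stmt3_aux_convex_nonneg : Convex ℝ {z : X | 0 ≤ z} := by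
  intro x hx y hy a b ha hb _
  exact add_nonneg (stmt3_aux_smul_nonneg ha hx) (stmt3_aux_smul_nonneg hb hy)

lemma stmt3_aux_orderConv_sigma {D : DirectedType} {f : D.ι → X} {x : X}
    (h : OrderConvNet D f x) : SigmaNConvNet D f x := by
  intro g hg
  have h0 : OrderConvNet D (fun i => f i - x) 0 := by
    obtain ⟨E, hh, h1, h2, h3⟩ := h
    refine ⟨E, hh, h1, h2, fun γ => ?_⟩
    obtain ⟨i₀, hi₀⟩ := h3 γ
    exact ⟨i₀, fun i hi => by simpa using hi₀ i hi⟩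
  have hfun : (fun i => g (f i) - g x) = fun i => g (f i - x) := by
    funext i; rw [map_sub]
  rw [hfun]
  exact hg D _ h0

lemma stmt3_aux_inOCDual (hoc : OCNorm X) (g : X →L[ℝ] ℝ) : InOCDual g := by
  intro D f hf ε hε
  obtain ⟨E, h, hdec, hglb, hdom⟩ := hf
  have h0 : ∀ γ, 0 ≤ h γ := fun γ => hglb.1 ⟨γ, rfl⟩
  obtain ⟨γ₀, hγ₀⟩ := hoc E h hdec hglb (ε / (‖g‖ + 1)) (by positivity)
  have hγ : ‖h γ₀‖ < ε / (‖g‖ + 1) := by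
    have := hγ₀ γ₀ (E.refl γ₀)
    rwa [abs_of_nonneg (norm_nonneg _)] at this
  obtain ⟨i₀, hi₀⟩ := hdom γ₀
  refine ⟨i₀, fun i hi => ?_⟩
  have h1 : |f i| ≤ h γ₀ := by simpa using hi₀ i hi
  have h2 : ‖f i‖ ≤ ‖h γ₀‖ := by
    refine norm_le_norm_of_abs_le_abs ?_
    rw [abs_of_nonneg (h0 γ₀)]
    exact h1
  calc |g (f i)| = ‖g (f i)‖ := (Real.norm_eq_abs _).symm
    _ ≤ ‖g‖ * ‖f i‖ := g.le_opNorm _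
    _ ≤ ‖g‖ * (ε / (‖g‖ + 1)) :=
        mul_le_mul_of_nonneg_left (h2.trans hγ.le) (norm_nonneg g)
    _ < ε := by
        have hlt : ‖g‖ / (‖g‖ + 1) < 1 :=
          (div_lt_one (by positivity)).mpr (by linarith [norm_nonneg g])
        calc ‖g‖ * (ε / (‖g‖ + 1)) = ε * (‖g‖ / (‖g‖ + 1)) := by ring
          _ < ε * 1 := mul_lt_mul_of_pos_left hlt hε
          _ = ε := mul_one ε

lemma stmt3_aux_closure_sub_orderClosure [CompleteSpace X] (hσ : SigmaDedekindComplete X)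
    {C : Set X} {x : X} (hx : x ∈ closure C) : x ∈ OrderClosure C := by
  have hex : ∀ n : ℕ, ∃ c ∈ C, ‖c - x‖ < (2⁻¹ : ℝ) ^ n := by
    intro n
    obtain ⟨c, hcC, hc⟩ := Metric.mem_closure_iff.mp hx ((2⁻¹ : ℝ) ^ n) (by positivity)
    exact ⟨c, hcC, by rwa [dist_comm, dist_eq_norm] at hc⟩
  choose c hcC hc using hex
  set d : ℕ → X := fun n => |c n - x| with hd_def
  have hd0 : ∀ n, 0 ≤ d n := fun n => abs_nonneg _
  have hdn : ∀ n, ‖d n‖ < (2⁻¹ : ℝ) ^ n := fun n => by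
    simpa [hd_def, norm_abs_eq_norm] using hc n
  have hgeo : ∀ n : ℕ, Summable (fun k : ℕ => (2⁻¹ : ℝ) ^ (n + k)) := by
    intro n
    simpa [pow_add] using
      (summable_geometric_of_lt_one (by norm_num : (0:ℝ) ≤ 2⁻¹)
        (by norm_num : (2⁻¹:ℝ) < 1)).mul_left ((2⁻¹ : ℝ) ^ n)
  have hsum : ∀ n : ℕ, Summable (fun k : ℕ => d (n + k)) := fun n =>
    Summable.of_norm_bounded (hgeo n) (fun k => (hdn (n + k)).le)
  set t : ℕ → X := fun n => ∑' k, d (n + k) with ht_def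
  have hdt : ∀ n k, d (n + k) ≤ t n := fun n k =>
    Summable.le_tsum (hsum n) k (fun j _ => hd0 _)
  have ht0 : ∀ n, 0 ≤ t n := fun n => le_trans (hd0 (n + 0)) (hdt n 0)
  have htn : ∀ n, ‖t n‖ ≤ (2⁻¹ : ℝ) ^ n * 2 := by
    intro n
    have h1 : Summable (fun k : ℕ => ‖d (n + k)‖) :=
      Summable.of_nonneg_of_le (fun k => norm_nonneg _) (fun k => (hdn _).le) (hgeo n)
    calc ‖t n‖ ≤ ∑' k, ‖d (n + k)‖ := norm_tsum_le_tsum_norm h1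
      _ ≤ ∑' k : ℕ, (2⁻¹ : ℝ) ^ (n + k) := Summable.tsum_le_tsum (fun k => (hdn _).le) h1 (hgeo n)
      _ = (2⁻¹ : ℝ) ^ n * 2 := by
          simp only [pow_add]
          rw [tsum_mul_left, tsum_geometric_of_lt_one (by norm_num) (by norm_num)]
          norm_num
  have hbdd : ∀ n : ℕ, BddAbove (Set.range fun k => d (n + k)) := fun n =>
    ⟨t n, by rintro _ ⟨k, rfl⟩; exact hdt n k⟩
  choose h hlub using fun n : ℕ => hσ (fun k => d (n + k)) (hbdd n)
  have hub : ∀ n k, d (n + k) ≤ h n := fun n k => (hlub n).1 ⟨k, rfl⟩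
  have hht : ∀ n, h n ≤ t n := fun n => (hlub n).2 (by rintro _ ⟨k, rfl⟩; exact hdt n k)
  have hh0 : ∀ n, 0 ≤ h n := fun n => le_trans (hd0 (n + 0)) (hub n 0)
  have hdec : ∀ n m : ℕ, n ≤ m → h m ≤ h n := by
    intro n m hnm
    refine (hlub m).2 ?_
    rintro _ ⟨k, rfl⟩
    show d (m + k) ≤ h n
    have he : m + k = n + (m - n + k) := by omega
    rw [he]
    exact hub n _
  have hglb : IsGLB (Set.range h) 0 := by
    constructor
    · rintro _ ⟨n, rfl⟩; exact hh0 n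
    · intro b hb
      have hb' : ∀ n, b ⊔ 0 ≤ t n := fun n => sup_le ((hb ⟨n, rfl⟩).trans (hht n)) (ht0 n)
      have hbn : ∀ n : ℕ, ‖b ⊔ 0‖ ≤ (2⁻¹ : ℝ) ^ n * 2 := by
        intro n
        refine le_trans (norm_le_norm_of_abs_le_abs ?_) (htn n)
        rw [abs_of_nonneg (le_sup_right : (0:X) ≤ b ⊔ 0), abs_of_nonneg (ht0 n)]
        exact hb' n
      have hlim : Filter.Tendsto (fun n : ℕ => (2⁻¹ : ℝ) ^ n * 2) Filter.atTop (nhds 0) := by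
        simpa using (tendsto_pow_atTop_nhds_zero_of_lt_one (by norm_num : (0:ℝ) ≤ 2⁻¹)
          (by norm_num : (2⁻¹:ℝ) < 1)).mul_const 2
      have hle0 : ‖b ⊔ 0‖ ≤ 0 := ge_of_tendsto' hlim hbn
      have hsup : b ⊔ 0 = 0 := norm_le_zero_iff.mp hle0
      exact sup_eq_right.mp hsup
  refine ⟨natDir, c, hcC, natDir, h, fun a b hab => hdec a b hab, hglb, ?_⟩
  show ∀ γ : ℕ, ∃ i₀ : ℕ, ∀ i : ℕ, i₀ ≤ i → |c i - x| ≤ h γ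
  intro γ
  refine ⟨γ, fun i hi => ?_⟩
  have he : γ + (i - γ) = i := by omega
  calc |c i - x| = d i := rfl
    _ ≤ h γ := by rw [← he]; exact hub γ (i - γ)

end Stmt3Aux

variable {X}
/-- a σ-Dedekind complete Banach lattice is order continuous iff the
order closure of every convex set coincides with its `σ(X, X_n^~)`-closure. -/
theorem stmt3 {X : Type*} [NormedAddCommGroup X] [Lattice X] [HasSolidNorm X]
    [IsOrderedAddMonoid X] [NormedSpace ℝ X] [CompleteSpace X]
    (hσ : SigmaDedekindComplete X) :
    OCNorm X ↔ ∀ C : Set X, Convex ℝ C → OrderClosure C = SigmaNClosure C := by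
  constructor
  · -- order continuity implies the closures coincide
    intro hoc C hCconv
    apply Set.Subset.antisymm
    · rintro x ⟨D, f, hfC, hconv⟩
      exact ⟨D, f, hfC, stmt3_aux_orderConv_sigma hconv⟩
    · rintro x ⟨D, f, hfC, hsig⟩
      apply stmt3_aux_closure_sub_orderClosure hσ
      by_contra hx
      obtain ⟨g, u', hgx, hgC⟩ :=
        geometric_hahn_banach_point_closed hCconv.closure isClosed_closure hx
      obtain ⟨i₀, hi₀⟩ := hsig g (stmt3_aux_inOCDual hoc g) (u' - g x) (by linarith)
      have h1 : |g (f i₀) - g x| < u' - g x := hi₀ i₀ (D.refl i₀)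
      have h2 : u' < g (f i₀) := hgC _ (subset_closure (hfC i₀))
      rw [abs_lt] at h1
      linarith [h1.2]
  · -- the closures coinciding implies order continuity
    intro hyp
    intro D f hdec hglb
    by_contra hnot
    simp only [NetTendstoZero, not_forall, not_exists, not_lt, exists_prop] at hnot
    obtain ⟨ε, hε, hcof⟩ := hnot
    have hf0 : ∀ i, 0 ≤ f i := fun i => hglb.1 ⟨i, rfl⟩
    have hnorm : ∀ i, ε ≤ ‖f i‖ := by
      intro i
      obtain ⟨j, hij, hj⟩ := hcof i
      rw [abs_of_nonneg (norm_nonneg _)] at hj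
      have hle : ‖f j‖ ≤ ‖f i‖ := by
        refine norm_le_norm_of_abs_le_abs ?_
        rw [abs_of_nonneg (hf0 j), abs_of_nonneg (hf0 i)]
        exact hdec i j hij
      linarith
    obtain ⟨iu⟩ := D.nonempty
    set u : X := f iu with hu_def
    have hu0 : 0 ≤ u := hf0 iu
    set G : Set X := {z | ∃ (m : ℕ) (j : D.ι), z = (2⁻¹ : ℝ) ^ m • u + (m : ℝ) • f j}
      with hG_def
    set C : Set X := convexHull ℝ G with hC_def
    have hCC := hyp C (convex_convexHull ℝ G)
    have hfo : OrderConvNet D f 0 :=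
      ⟨D, f, hdec, hglb, fun γ => ⟨γ, fun i hi => by
        rw [sub_zero, abs_of_nonneg (hf0 i)]; exact hdec γ i hi⟩⟩
    -- `0` belongs to the `σ(X, X_n^~)`-closure of `C`
    have hmem : (0 : X) ∈ SigmaNClosure C := by
      classical
      refine ⟨⟨ℕ × (ℕ → D.ι), fun p q => p.1 ≤ q.1 ∧ ∀ k, D.r (p.2 k) (q.2 k),
        ⟨(0, fun _ => iu)⟩,
        fun a => ⟨le_refl _, fun k => D.refl _⟩,
        fun a b c hab hbc => ⟨hab.1.trans hbc.1, fun k => D.trans _ _ _ (hab.2 k) (hbc.2 k)⟩,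
        fun a b => ⟨(max a.1 b.1, fun k => Classical.choose (D.directed (a.2 k) (b.2 k))),
          ⟨le_max_left _ _, fun k => (Classical.choose_spec (D.directed (a.2 k) (b.2 k))).1⟩,
          ⟨le_max_right _ _, fun k => (Classical.choose_spec (D.directed (a.2 k) (b.2 k))).2⟩⟩⟩,
        fun p => (2⁻¹ : ℝ) ^ p.1 • u + (p.1 : ℝ) • f (p.2 p.1),
        fun p => subset_convexHull ℝ G ⟨p.1, p.2 p.1, rfl⟩, ?_⟩
      intro g hg ε' hε'
      have hgf : NetTendstoZero D fun i => g (f i) := hg D f hfo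
      have hten : Filter.Tendsto (fun m : ℕ => (2⁻¹ : ℝ) ^ m * |g u|) Filter.atTop (nhds 0) := by
        simpa using (tendsto_pow_atTop_nhds_zero_of_lt_one (by norm_num : (0:ℝ) ≤ 2⁻¹)
          (by norm_num : (2⁻¹:ℝ) < 1)).mul_const |g u|
      obtain ⟨m₀, hm₀⟩ := Filter.eventually_atTop.mp
        (hten.eventually_lt_const (by positivity : (0:ℝ) < ε' / 2))
      have hφex : ∀ m : ℕ, ∃ j₀, ∀ j, D.r j₀ j → |g (f j)| < ε' / (2 * ((m : ℝ) + 1)) :=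
        fun m => hgf (ε' / (2 * ((m : ℝ) + 1))) (by positivity)
      choose φ₀ hφ₀ using hφex
      refine ⟨(m₀, φ₀), ?_⟩
      intro p hp
      obtain ⟨hm, hφ⟩ := hp
      obtain ⟨m, φ⟩ := p
      have e1 : (2⁻¹ : ℝ) ^ m * |g u| < ε' / 2 := hm₀ m hm
      have e2 : |g (f (φ m))| < ε' / (2 * ((m : ℝ) + 1)) := hφ₀ m (φ m) (hφ m)
      show |g ((2⁻¹ : ℝ) ^ m • u + (m : ℝ) • f (φ m)) - g 0| < ε'
      have hgv : g ((2⁻¹ : ℝ) ^ m • u + (m : ℝ) • f (φ m)) - g 0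
          = (2⁻¹ : ℝ) ^ m * g u + (m : ℝ) * g (f (φ m)) := by
        rw [map_zero, sub_zero, map_add, map_smul, map_smul, smul_eq_mul, smul_eq_mul]
      rw [hgv]
      have b1 : |(2⁻¹ : ℝ) ^ m * g u| < ε' / 2 := by
        rwa [abs_mul, abs_of_nonneg (by positivity : (0:ℝ) ≤ (2⁻¹ : ℝ) ^ m)]
      have b2 : |(m : ℝ) * g (f (φ m))| ≤ (m : ℝ) * (ε' / (2 * ((m : ℝ) + 1))) := by
        rw [abs_mul, abs_of_nonneg (Nat.cast_nonneg m)]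
        exact mul_le_mul_of_nonneg_left e2.le (Nat.cast_nonneg m)
      have b3 : (m : ℝ) * (ε' / (2 * ((m : ℝ) + 1))) < ε' / 2 := by
        have hkey : (m : ℝ) * (ε' / (2 * ((m : ℝ) + 1))) = (ε' / 2) * ((m : ℝ) / ((m : ℝ) + 1)) := by
          field_simp
        have hlt1 : (m : ℝ) / ((m : ℝ) + 1) < 1 :=
          (div_lt_one (by positivity)).mpr (lt_add_one _)
        calc (m : ℝ) * (ε' / (2 * ((m : ℝ) + 1))) = (ε' / 2) * ((m : ℝ) / ((m : ℝ) + 1)) := hkey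
          _ < (ε' / 2) * 1 := mul_lt_mul_of_pos_left hlt1 (by positivity)
          _ = ε' / 2 := mul_one _
      calc |(2⁻¹ : ℝ) ^ m * g u + (m : ℝ) * g (f (φ m))|
          ≤ |(2⁻¹ : ℝ) ^ m * g u| + |(m : ℝ) * g (f (φ m))| := abs_add_le _ _
        _ < ε' / 2 + ε' / 2 := by
            refine add_lt_add_of_lt_of_le b1 ?_
            exact b2.trans b3.le
        _ = ε' := by ring
    -- hence `0` is in the order closure of `C`
    rw [← hCC] at hmem
    obtain ⟨D', c, hcC, E, h, hhdec, hhglb, hhdom⟩ := hmem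
    have hh0 : ∀ γ, 0 ≤ h γ := fun γ => hhglb.1 ⟨γ, rfl⟩
    have hG0 : G ⊆ {z : X | 0 ≤ z} := by
      rintro w ⟨m, j, rfl⟩
      exact add_nonneg (stmt3_aux_smul_nonneg (by positivity) hu0)
        (stmt3_aux_smul_nonneg (Nat.cast_nonneg m) (hf0 j))
    have hC0 : ∀ z ∈ C, 0 ≤ z := fun z hz =>
      convexHull_min hG0 stmt3_aux_convex_nonneg hz
    obtain ⟨γ₀⟩ := E.nonempty
    set M : ℝ := ‖h γ₀‖ with hM_def
    obtain ⟨i₁, hi₁⟩ := hhdom γ₀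
    set N : ℕ := ⌈2 * M / ε⌉₊ + 1 with hN_def
    set η : ℝ := (2⁻¹ : ℝ) ^ N * 2⁻¹ with hη_def
    have hη0 : 0 < η := by rw [hη_def]; positivity
    -- the blocking estimate: bounded elements of `C` dominate `η • u`
    have hblock : ∀ z ∈ C, ‖z‖ ≤ M → η • u ≤ z := by
      intro z hz hzM
      rw [hC_def, convexHull_eq] at hz
      obtain ⟨ι, t, w, zf, hw0, hw1, hzG, hcm⟩ := hz
      classical
      have hz_eq : z = ∑ i ∈ t, w i • zf i := by
        rw [← hcm, Finset.centerMass_eq_of_sum_1 _ _ hw1]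
      have hrep : ∀ i ∈ t, ∃ (m : ℕ) (j : D.ι),
          zf i = (2⁻¹ : ℝ) ^ m • u + (m : ℝ) • f j := fun i hi => hzG i hi
      haveI : Nonempty D.ι := D.nonempty
      choose! mm jj hmj using hrep
      obtain ⟨J, hJ⟩ := DirectedType.exists_finset_ub D (t.image jj)
      have hfJ : ∀ i ∈ t, f J ≤ f (jj i) := fun i hi =>
        hdec _ _ (hJ _ (Finset.mem_image_of_mem jj hi))
      have hzf0 : ∀ i ∈ t, 0 ≤ zf i := by
        intro i hi
        rw [hmj i hi]
        exact add_nonneg (stmt3_aux_smul_nonneg (by positivity) hu0)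
          (stmt3_aux_smul_nonneg (Nat.cast_nonneg _) (hf0 _))
      set T : ℝ := ∑ i ∈ t, w i * (mm i : ℝ) with hT_def
      have hT0 : 0 ≤ T :=
        Finset.sum_nonneg fun i hi => mul_nonneg (hw0 i hi) (Nat.cast_nonneg _)
      have hA : T • f J ≤ z := by
        rw [hz_eq, hT_def, Finset.sum_smul]
        refine Finset.sum_le_sum fun i hi => ?_
        rw [mul_smul]
        refine stmt3_aux_smul_le_smul (hw0 i hi) ?_
        rw [hmj i hi]
        calc ((mm i : ℝ)) • f J ≤ ((mm i : ℝ)) • f (jj i) :=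
              stmt3_aux_smul_le_smul (Nat.cast_nonneg _) (hfJ i hi)
          _ ≤ (2⁻¹ : ℝ) ^ (mm i) • u + ((mm i : ℝ)) • f (jj i) :=
              le_add_of_nonneg_left (stmt3_aux_smul_nonneg (by positivity) hu0)
      have hTM : T * ε ≤ M := by
        have h1 : 0 ≤ T • f J := stmt3_aux_smul_nonneg hT0 (hf0 J)
        have h2 : ‖T • f J‖ ≤ ‖z‖ := by
          refine norm_le_norm_of_abs_le_abs ?_
          rw [abs_of_nonneg h1, abs_of_nonneg (h1.trans hA)]
          exact hA
        rw [norm_smul, Real.norm_eq_abs, abs_of_nonneg hT0] at h2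
        calc T * ε ≤ T * ‖f J‖ := mul_le_mul_of_nonneg_left (hnorm J) hT0
          _ ≤ ‖z‖ := h2
          _ ≤ M := hzM
      have hNε : 2 * M / ε ≤ (N : ℝ) := by
        have h1 := Nat.le_ceil (2 * M / ε)
        have h2 : ((⌈2 * M / ε⌉₊ : ℕ) : ℝ) ≤ (N : ℝ) := by
          exact_mod_cast Nat.le_succ _
        linarith
      have hN0 : (0 : ℝ) < (N : ℝ) := by
        rw [hN_def]; push_cast; positivity
      set t' := t.filter (fun i => mm i ≤ N) with ht'_def
      set W : ℝ := ∑ i ∈ t', w i with hW_def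
      have hW_half : 1 / 2 ≤ W := by
        have hsplit : W + ∑ i ∈ t.filter (fun i => ¬ mm i ≤ N), w i = 1 := by
          rw [hW_def, ht'_def, Finset.sum_filter_add_sum_filter_not, hw1]
        set S : ℝ := ∑ i ∈ t.filter (fun i => ¬ mm i ≤ N), w i with hS_def
        have hS0 : 0 ≤ S :=
          Finset.sum_nonneg fun i hi => hw0 i (Finset.mem_filter.mp hi).1
        have hmark : S * (N : ℝ) ≤ T := by
          rw [hS_def, Finset.sum_mul]
          calc ∑ i ∈ t.filter (fun i => ¬ mm i ≤ N), w i * (N : ℝ)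
              ≤ ∑ i ∈ t.filter (fun i => ¬ mm i ≤ N), w i * (mm i : ℝ) := by
                refine Finset.sum_le_sum fun i hi => ?_
                have h5 := Finset.mem_filter.mp hi
                have h6 : (N : ℝ) ≤ (mm i : ℝ) := by
                  exact_mod_cast (not_le.mp h5.2).le
                exact mul_le_mul_of_nonneg_left h6 (hw0 i h5.1)
            _ ≤ T := by
                rw [hT_def]
                refine Finset.sum_le_sum_of_subset_of_nonneg (Finset.filter_subset _ _) ?_
                intro i hi _
                exact mul_nonneg (hw0 i hi) (Nat.cast_nonneg _)
        have hMN : 2 * M ≤ (N : ℝ) * ε := by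
          rw [div_le_iff₀ hε] at hNε
          linarith
        have hSN : S * ((N : ℝ) * ε) ≤ M := by
          calc S * ((N : ℝ) * ε) = S * (N : ℝ) * ε := by ring
            _ ≤ T * ε := mul_le_mul_of_nonneg_right hmark hε.le
            _ ≤ M := hTM
        nlinarith [mul_pos hN0 hε]
      have hB : ((2⁻¹ : ℝ) ^ N * W) • u ≤ z := by
        rw [hz_eq]
        have step1 : ((2⁻¹ : ℝ) ^ N * W) • u = ∑ i ∈ t', (w i * (2⁻¹ : ℝ) ^ N) • u := by
          rw [← Finset.sum_smul, ← Finset.sum_mul, mul_comm]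
        rw [step1]
        calc ∑ i ∈ t', (w i * (2⁻¹ : ℝ) ^ N) • u ≤ ∑ i ∈ t', w i • zf i := by
              refine Finset.sum_le_sum fun i hi => ?_
              have hit := Finset.mem_filter.mp hi
              rw [mul_smul]
              refine stmt3_aux_smul_le_smul (hw0 i hit.1) ?_
              rw [hmj i hit.1]
              calc (2⁻¹ : ℝ) ^ N • u ≤ (2⁻¹ : ℝ) ^ (mm i) • u :=
                    stmt3_aux_smul_le_smul_coeff
                      (pow_le_pow_of_le_one (by norm_num) (by norm_num) hit.2) hu0
                _ ≤ (2⁻¹ : ℝ) ^ (mm i) • u + ((mm i : ℝ)) • f (jj i) :=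
                    le_add_of_nonneg_right (stmt3_aux_smul_nonneg (Nat.cast_nonneg _) (hf0 _))
          _ ≤ ∑ i ∈ t, w i • zf i :=
              Finset.sum_le_sum_of_subset_of_nonneg (Finset.filter_subset _ _)
                (fun i hi _ => stmt3_aux_smul_nonneg (hw0 i hi) (hzf0 i hi))
      have hfinal : η • u ≤ ((2⁻¹ : ℝ) ^ N * W) • u := by
        refine stmt3_aux_smul_le_smul_coeff ?_ hu0
        rw [hη_def]
        refine mul_le_mul_of_nonneg_left ?_ (by positivity)
        rw [show ((2:ℝ)⁻¹ : ℝ) = 1 / 2 by norm_num]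
        exact hW_half
      exact hfinal.trans hB
    -- conclude: `η • u` is a positive lower bound of the net `h`, contradiction
    have hηu : ∀ γ, η • u ≤ h γ := by
      intro γ
      obtain ⟨i₂, hi₂⟩ := hhdom γ
      obtain ⟨i₃, h13, h23⟩ := D'.directed i₁ i₂
      have hc0 : 0 ≤ c i₃ := hC0 _ (hcC i₃)
      have e1 : |c i₃ - 0| ≤ h γ₀ := hi₁ i₃ h13
      have e2 : |c i₃ - 0| ≤ h γ := hi₂ i₃ h23
      rw [sub_zero, abs_of_nonneg hc0] at e1 e2
      have hnorm3 : ‖c i₃‖ ≤ M := by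
        refine norm_le_norm_of_abs_le_abs ?_
        rw [abs_of_nonneg hc0, abs_of_nonneg (hh0 γ₀)]
        exact e1
      exact (hblock _ (hcC i₃) hnorm3).trans e2
    have hlb : η • u ∈ lowerBounds (Set.range h) := by
      rintro _ ⟨γ, rfl⟩
      exact hηu γ
    have hle : η • u ≤ 0 := hhglb.2 hlb
    have hge : 0 ≤ η • u := stmt3_aux_smul_nonneg hη0.le hu0
    have heq : η • u = 0 := le_antisymm hle hge
    have hu_eq : u = 0 := by
      rcases smul_eq_zero.mp heq with h' | h'
      · exact absurd h' (ne_of_gt hη0)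
      · exact h'
    have h9 : ε ≤ ‖u‖ := hnorm iu
    rw [hu_eq, norm_zero] at h9
    linarith
end
end

section
/- Let X be an order continuous Banach lattice. Then every order closed convex subset of X is σ(X, X_n^~)-closed. -/
open Filter Topology Pointwise

noncomputable section

variable {X : Type*} [NormedAddCommGroup X] [Lattice X] [HasSolidNorm X] [IsOrderedAddMonoid X] [NormedSpace ℝ X]

variable (X)

/-- Under order continuity of the norm, every continuous functional is order continuous. -/
lemma all_inOCDual {X : Type*} [NormedAddCommGroup X] [Lattice X] [HasSolidNorm X] [IsOrderedAddMonoid X] [NormedSpace ℝ X]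
    (hoc : OCNorm X) (g : X →L[ℝ] ℝ) : InOCDual g := by
  rintro D f ⟨E, h, hdec, hglb, hdom⟩ ε hε
  have hnorm := hoc E h hdec hglb
  have hδ : 0 < ε / (‖g‖ + 1) := by positivity
  obtain ⟨γ₀, hγ₀⟩ := hnorm _ hδ
  have hγ := hγ₀ γ₀ (E.refl γ₀)
  obtain ⟨i₀, hi₀⟩ := hdom γ₀
  refine ⟨i₀, fun i hi => ?_⟩
  have hfi : |f i - 0| ≤ h γ₀ := hi₀ i hi
  have hpos : 0 ≤ h γ₀ := hglb.1 ⟨γ₀, rfl⟩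
  have hle : ‖f i‖ ≤ ‖h γ₀‖ := by
    have : |f i| ≤ |h γ₀| := by rw [abs_of_nonneg hpos]; rwa [sub_zero] at hfi
    exact norm_le_norm_of_abs_le_abs this
  have hlt : ‖f i‖ < ε / (‖g‖ + 1) := lt_of_le_of_lt hle (lt_of_abs_lt hγ)
  calc |g (f i)| ≤ ‖g‖ * ‖f i‖ := g.le_opNorm (f i)
    _ ≤ ‖g‖ * (ε / (‖g‖ + 1)) := by
        exact mul_le_mul_of_nonneg_left hlt.le (norm_nonneg g)
    _ < ε := by
        have h1 : ‖g‖ / (‖g‖ + 1) < 1 := by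
          rw [div_lt_one (by positivity)]; linarith [norm_nonneg g]
        calc ‖g‖ * (ε / (‖g‖ + 1)) = (‖g‖ / (‖g‖ + 1)) * ε := by ring
          _ < 1 * ε := by exact mul_lt_mul_of_pos_right h1 hε
          _ = ε := one_mul ε

/-- An order closed set is norm closed. -/
lemma isClosed_of_orderClosed {X : Type*} [NormedAddCommGroup X] [Lattice X] [HasSolidNorm X] [IsOrderedAddMonoid X] [NormedSpace ℝ X]
    [CompleteSpace X] {C : Set X} (hC : IsOrderClosed C) : IsClosed C := by
  rw [← closure_subset_iff_isClosed]
  intro x hx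
  have hch : ∀ n : ℕ, ∃ y ∈ C, dist x y < (1/2 : ℝ)^n := fun n =>
    Metric.mem_closure_iff.mp hx _ (by positivity)
  choose s hsC hs using hch
  set u : ℕ → X := fun n => |s n - x| with hu
  have hun : ∀ n, 0 ≤ u n := fun n => abs_nonneg _
  have hunorm : ∀ n, ‖u n‖ < (1/2 : ℝ)^n := by
    intro n
    rw [hu]
    simp only [norm_abs_eq_norm]
    rw [← dist_eq_norm']
    exact hs n
  have hsum : Summable u :=
    Summable.of_norm_bounded (summable_geometric_of_lt_one (by norm_num) (by norm_num))
      (fun n => (hunorm n).le)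
  set t : ℕ → X := fun m => ∑' k, u (k + m) with ht
  have hsumm : ∀ m : ℕ, Summable (fun k => u (k + m)) := by
    intro m; exact (summable_nat_add_iff m).mpr hsum
  have htpos : ∀ m, 0 ≤ t m := fun m => tsum_nonneg (fun k => hun _)
  have htdec : ∀ m m' : ℕ, m ≤ m' → t m' ≤ t m := by
    intro m m' hmm
    obtain ⟨d, rfl⟩ := Nat.exists_eq_add_of_le hmm
    have hs2 : Summable (fun n => (fun k => u (k + m)) (n + d)) := by
      have heq : (fun n => (fun k => u (k + m)) (n + d)) = fun n => u (n + (d + m)) := by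
        funext n; simp only []; congr 1; omega
      rw [heq]
      exact (summable_nat_add_iff (d + m)).mpr hsum
    have key : (∑' k, u (k + m)) = (∑ i ∈ Finset.range d, u (i + m)) + ∑' k, u (k + d + m) := by
      have h3 := Summable.sum_add_tsum_nat_add' (f := fun k => u (k + m)) (k := d) hs2
      rw [← h3]
    rw [ht]
    simp only
    rw [key]
    have : (fun k => u (k + (m + d))) = fun k => u (k + d + m) := by
      funext k; congr 1; omega
    rw [this]
    exact le_add_of_nonneg_left (Finset.sum_nonneg fun i _ => hun _)
  have htlim : Filter.Tendsto t Filter.atTop (nhds 0) := by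
    apply squeeze_zero_norm (a := fun m => (1/2 : ℝ)^m * 2)
    · intro m
      have hgeo : Summable (fun k : ℕ => (1/2 : ℝ)^(k + m)) :=
        ((summable_geometric_of_lt_one (by norm_num) (by norm_num)).comp_injective
          (add_left_injective m))
      have hnormsum : Summable (fun k => ‖u (k + m)‖) :=
        Summable.of_nonneg_of_le (fun k => norm_nonneg _) (fun k => (hunorm _).le) hgeo
      calc ‖t m‖ ≤ ∑' k, ‖u (k + m)‖ := norm_tsum_le_tsum_norm hnormsum
        _ ≤ ∑' k : ℕ, (1/2 : ℝ)^(k + m) := Summable.tsum_le_tsum (fun k => (hunorm _).le) hnormsum hgeo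
        _ = (1/2 : ℝ)^m * 2 := by
            have : ∀ k : ℕ, (1/2 : ℝ)^(k + m) = (1/2 : ℝ)^m * (1/2)^k := by
              intro k; rw [pow_add]; ring
            simp_rw [this]
            rw [tsum_mul_left, tsum_geometric_of_lt_one (by norm_num) (by norm_num)]
            norm_num
    · have : Filter.Tendsto (fun m : ℕ => (1/2 : ℝ)^m) Filter.atTop (nhds 0) :=
        tendsto_pow_atTop_nhds_zero_of_lt_one (by norm_num) (by norm_num)
      simpa using this.mul_const 2
  have hglb : IsGLB (Set.range t) 0 := by
    constructor
    · rintro _ ⟨m, rfl⟩; exact htpos m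
    · intro b hb
      have hble : ∀ m, b ≤ t m := fun m => hb ⟨m, rfl⟩
      exact ge_of_tendsto' htlim hble
  apply hC
  have key : ∀ γ i : ℕ, γ ≤ i → |s i - x| ≤ t γ := by
    intro γ i hi
    calc |s i - x| = u i := rfl
      _ = u ((i - γ) + γ) := by congr 1; omega
      _ ≤ ∑' k, u (k + γ) := Summable.le_tsum (hsumm γ) (i - γ) (fun j _ => hun _)
      _ = t γ := rfl
  exact ⟨natDir, s, hsC, natDir, t, fun m m' h => htdec m m' h, hglb,
    fun γ => ⟨γ, fun i hi => key γ i hi⟩⟩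

variable {X}
/-- in an order continuous Banach lattice, every order closed convex
set is `σ(X, X_n^~)`-closed. -/
theorem stmt4 {X : Type*} [NormedAddCommGroup X] [Lattice X] [HasSolidNorm X] [IsOrderedAddMonoid X] [NormedSpace ℝ X] [CompleteSpace X]
    (hoc : OCNorm X) :
    ∀ C : Set X, Convex ℝ C → IsOrderClosed C → IsSigmaNClosed C := by
  intro C hconv hord D f hf x hx
  by_contra hxC
  have hclosed : IsClosed C := isClosed_of_orderClosed hord
  obtain ⟨g, u, hgC, hgx⟩ := geometric_hahn_banach_closed_point hconv hclosed hxC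
  obtain ⟨i₀, hi₀⟩ := hx g (all_inOCDual hoc g) (g x - u) (by linarith)
  have h1 := hi₀ i₀ (D.refl i₀)
  have h2 := hgC (f i₀) (hf i₀)
  rw [abs_sub_lt_iff] at h1
  linarith [h1.2]
end
end

section
/- A σ-Dedekind complete Banach lattice X is order continuous if and only if for every norm bounded sequence (f_n) in X₊, convergence f_n → 0 in the topology σ(X, X_n^~) implies weak convergence f_n → 0 (i.e., with respect to σ(X, X*)). -/
open Filter Topology Pointwise

noncomputable section

variable {X : Type*} [NormedAddCommGroup X] [Lattice X] [HasSolidNorm X] [IsOrderedAddMonoid X] [NormedSpace ℝ X]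

variable (X)

variable {X}

theorem aux_smul_nonneg_s6 {Y : Type*} [NormedAddCommGroup Y] [Lattice Y] [HasSolidNorm Y] [IsOrderedAddMonoid Y] [NormedSpace ℝ Y]
    {a : ℝ} (ha : 0 ≤ a) {z : Y} (hz : 0 ≤ z) : 0 ≤ a • z := by
  have hdy : ∀ (k m : ℕ), 0 ≤ ((m : ℝ) / 2 ^ k) • z := by
    intro k
    induction k with
    | zero =>
      intro m
      simpa [Nat.cast_smul_eq_nsmul] using nsmul_nonneg hz m
    | succ k ih =>
      intro m
      have h2 : (2 : ℕ) • (((m : ℝ) / 2 ^ (k + 1)) • z) = ((m : ℝ) / 2 ^ k) • z := by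
        rw [← Nat.cast_smul_eq_nsmul ℝ, smul_smul]
        congr 1
        push_cast
        ring
      have h := ih m
      rw [← h2] at h
      exact nsmul_two_semiclosed h
  set q : ℕ → ℝ := fun j => (⌊a * 2 ^ j⌋₊ : ℝ) / 2 ^ j with hq
  have hqz : ∀ j, 0 ≤ q j • z := fun j => hdy j _
  have hqa : ∀ j : ℕ, |q j - a| ≤ 1 / 2 ^ j := by
    intro j
    have h2p : (0:ℝ) < 2 ^ j := by positivity
    have hup := Nat.lt_floor_add_one (a * 2 ^ j)
    have hfl : (⌊a * 2 ^ j⌋₊ : ℝ) ≤ a * 2 ^ j := Nat.floor_le (by positivity)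
    rw [abs_le, hq]
    constructor
    · rw [neg_le, neg_sub, sub_le_iff_le_add, ← add_div, le_div_iff₀ h2p]
      nlinarith
    · rw [sub_le_iff_le_add, div_le_iff₀ h2p]
      have hcancel : (1 / (2:ℝ) ^ j) * 2 ^ j = 1 := by field_simp
      nlinarith [hcancel]
  have htend : Tendsto (fun j => q j • z) atTop (𝓝 (a • z)) := by
    rw [tendsto_iff_norm_sub_tendsto_zero]
    apply squeeze_zero (fun j => norm_nonneg _) (g := fun j => (1 / 2 ^ j) * ‖z‖)
    · intro j
      rw [← sub_smul, norm_smul]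
      exact mul_le_mul_of_nonneg_right (hqa j) (norm_nonneg z)
    · have : Tendsto (fun j : ℕ => (1 / 2 : ℝ) ^ j) atTop (𝓝 0) :=
        tendsto_pow_atTop_nhds_zero_of_lt_one (by norm_num) (by norm_num)
      simpa [one_div, inv_pow] using this.mul_const ‖z‖
  exact ge_of_tendsto' htend hqz

theorem aux_smul_le_s6 {Y : Type*} [NormedAddCommGroup Y] [Lattice Y] [HasSolidNorm Y] [IsOrderedAddMonoid Y] [NormedSpace ℝ Y]
    {a : ℝ} (ha : 0 ≤ a) {p q : Y} (h : p ≤ q) : a • p ≤ a • q := by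
  have := aux_smul_nonneg_s6 ha (sub_nonneg.2 h)
  rwa [smul_sub, sub_nonneg] at this

theorem aux_mazur {Y : Type*} [NormedAddCommGroup Y] [Lattice Y] [HasSolidNorm Y] [IsOrderedAddMonoid Y] [NormedSpace ℝ Y]
    (f : ℕ → Y) (hpos : ∀ n, 0 ≤ f n) (hanti : ∀ m n, m ≤ n → f n ≤ f m)
    (hw : ∀ g : Y →L[ℝ] ℝ, Tendsto (fun n => g (f n)) atTop (𝓝 0)) :
    Tendsto (fun n => ‖f n‖) atTop (𝓝 0) := by
  have hzero : (0 : Y) ∈ closure (convexHull ℝ (Set.range f)) := by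
    by_contra h
    obtain ⟨g, u, hgu, hu⟩ := geometric_hahn_banach_closed_point
      ((convex_convexHull ℝ _).closure) isClosed_closure h
    rw [map_zero] at hu
    have hev := (hw g).eventually (eventually_gt_nhds hu)
    obtain ⟨n, hn⟩ := hev.exists
    exact absurd hn (not_lt.2 (hgu _ (subset_closure
      (subset_convexHull ℝ _ (Set.mem_range_self n)))).le)
  have hdom : ∀ c ∈ convexHull ℝ (Set.range f), ∃ m, f m ≤ c := by
    intro c hc
    have hsub : convexHull ℝ (Set.range f) ⊆ {c : Y | ∃ m, f m ≤ c} := by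
      refine convexHull_min ?_ ?_
      · rintro x ⟨n, rfl⟩; exact ⟨n, le_refl _⟩
      · rintro x ⟨mx, hmx⟩ y ⟨my, hmy⟩ a b ha hb hab
        refine ⟨max mx my, ?_⟩
        calc f (max mx my) = a • f (max mx my) + b • f (max mx my) :=
              (Convex.combo_self hab _).symm
          _ ≤ a • x + b • y :=
              add_le_add (aux_smul_le_s6 ha
                  ((hanti _ _ (le_max_left _ _)).trans hmx))
                (aux_smul_le_s6 hb
                  ((hanti _ _ (le_max_right _ _)).trans hmy))
    exact hsub hc
  have key : ∀ ε : ℝ, 0 < ε → ∃ m, ‖f m‖ < ε := by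
    intro ε hε
    obtain ⟨c, hc, hdist⟩ := Metric.mem_closure_iff.1 hzero ε hε
    obtain ⟨m, hm⟩ := hdom c hc
    have hcnorm : ‖c‖ < ε := by rwa [dist_comm, dist_zero_right] at hdist
    refine ⟨m, lt_of_le_of_lt ?_ hcnorm⟩
    apply norm_le_norm_of_abs_le_abs
    rw [abs_of_nonneg (hpos m), abs_of_nonneg ((hpos m).trans hm)]
    exact hm
  rw [Metric.tendsto_atTop]
  intro ε hε
  obtain ⟨m, hm⟩ := key ε hε
  refine ⟨m, fun n hn => ?_⟩
  rw [Real.dist_eq, sub_zero, abs_of_nonneg (norm_nonneg _)]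
  exact lt_of_le_of_lt (norm_le_norm_of_abs_le_abs
    (by rw [abs_of_nonneg (hpos n), abs_of_nonneg (hpos m)]; exact hanti m n hn)) hm

theorem aux_up {Y : Type*} [NormedAddCommGroup Y] [Lattice Y] [HasSolidNorm Y] [IsOrderedAddMonoid Y] [NormedSpace ℝ Y]
    (hσ : SigmaDedekindComplete Y)
    (hyp : ∀ f : ℕ → Y, (∀ n, 0 ≤ f n) → (∃ M : ℝ, ∀ n, ‖f n‖ ≤ M) →
        (∀ g : Y →L[ℝ] ℝ, InOCDual g → Tendsto (fun n => g (f n)) atTop (𝓝 0)) →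
        WeaklyNull f)
    (u : ℕ → Y) (hmono : Monotone u) (b : Y) (hub : ∀ n, u n ≤ b) :
    ∃ x, IsLUB (Set.range u) x ∧ Tendsto (fun n => ‖x - u n‖) atTop (𝓝 0) := by
  obtain ⟨x, hx⟩ := hσ u ⟨b, by rintro _ ⟨n, rfl⟩; exact hub n⟩
  set f : ℕ → Y := fun n => x - u n with hf
  have hpos : ∀ n, 0 ≤ f n := fun n => sub_nonneg.2 (hx.1 (Set.mem_range_self n))
  have hanti : ∀ m n, m ≤ n → f n ≤ f m := fun m n h => sub_le_sub_left (hmono h) x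
  have hbd : ∃ M : ℝ, ∀ n, ‖f n‖ ≤ M := by
    refine ⟨‖f 0‖, fun n => norm_le_norm_of_abs_le_abs ?_⟩
    rw [abs_of_nonneg (hpos n), abs_of_nonneg (hpos 0)]
    exact hanti 0 n (Nat.zero_le n)
  have hglb : IsGLB (Set.range f) 0 := by
    constructor
    · rintro _ ⟨n, rfl⟩; exact hpos n
    · intro c hc
      have hub2 : ∀ n, u n ≤ x - c := by
        intro n
        have := hc (Set.mem_range_self n)
        rwa [le_sub_comm] at this
      have : x ≤ x - c := hx.2 (by rintro _ ⟨n, rfl⟩; exact hub2 n)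
      rwa [le_sub_self_iff] at this
  have horder : OrderConvNet natDir f 0 := by
    refine ⟨natDir, f, fun γ₁ γ₂ h => hanti γ₁ γ₂ h, hglb, fun γ => ⟨γ, fun i hi => ?_⟩⟩
    rw [sub_zero, abs_of_nonneg (hpos i)]
    exact hanti γ i hi
  have hσn : ∀ g : Y →L[ℝ] ℝ, InOCDual g → Tendsto (fun n => g (f n)) atTop (𝓝 0) := by
    intro g hg
    have h := hg natDir f horder
    rw [Metric.tendsto_atTop]
    intro ε hε
    obtain ⟨i₀, hi₀⟩ := h ε hε
    exact ⟨i₀, fun n hn => by simpa [Real.dist_eq] using hi₀ n hn⟩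
  have hweak := hyp f hpos hbd hσn
  exact ⟨x, hx, aux_mazur f hpos hanti hweak⟩

/-- a σ-Dedekind complete Banach lattice is order continuous iff for
every norm bounded positive sequence, `σ(X, X_n^~)`-convergence to `0` implies weak
convergence to `0`. -/
theorem stmt6 {X : Type*} [NormedAddCommGroup X] [Lattice X] [HasSolidNorm X] [IsOrderedAddMonoid X] [NormedSpace ℝ X] [CompleteSpace X]
    (hσ : SigmaDedekindComplete X) :
    OCNorm X ↔
      ∀ f : ℕ → X, (∀ n, 0 ≤ f n) → (∃ M : ℝ, ∀ n, ‖f n‖ ≤ M) →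
        (∀ g : X →L[ℝ] ℝ, InOCDual g → Filter.Tendsto (fun n => g (f n)) Filter.atTop (nhds 0)) →
        WeaklyNull f := by
  constructor
  · intro hoc f hpos hbd hg g
    apply hg g
    intro D p hp
    obtain ⟨E, h, hdec, hglbE, hdom⟩ := hp
    intro ε hε
    obtain ⟨γ₀, hγ₀⟩ := hoc E h hdec hglbE (ε / (‖g‖ + 1)) (by positivity)
    obtain ⟨i₀, hi₀⟩ := hdom γ₀
    refine ⟨i₀, fun i hi => ?_⟩
    have h1 : |p i - 0| ≤ h γ₀ := hi₀ i hi
    rw [sub_zero] at h1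
    have hpos' : 0 ≤ h γ₀ := hglbE.1 (Set.mem_range_self γ₀)
    have h2 : ‖p i‖ ≤ ‖h γ₀‖ :=
      norm_le_norm_of_abs_le_abs (by rwa [abs_of_nonneg hpos'])
    have h3 := hγ₀ γ₀ (E.refl γ₀)
    rw [abs_of_nonneg (norm_nonneg _)] at h3
    have h4 : |g (p i)| ≤ ‖g‖ * ‖p i‖ := by
      rw [← Real.norm_eq_abs]
      exact g.le_opNorm _
    have h5 : ‖g‖ * ‖p i‖ ≤ ‖g‖ * ‖h γ₀‖ :=
      mul_le_mul_of_nonneg_left h2 (norm_nonneg g)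
    have hgnn : (0:ℝ) ≤ ‖g‖ := norm_nonneg g
    have h6 : ‖g‖ * ‖h γ₀‖ < ε := by
      calc ‖g‖ * ‖h γ₀‖ ≤ ‖g‖ * (ε / (‖g‖ + 1)) :=
            mul_le_mul_of_nonneg_left h3.le hgnn
        _ < ε := by
            rw [mul_div_assoc', div_lt_iff₀ (by positivity)]
            nlinarith
    linarith
  · intro hyp D f hdec hglb
    have hpos : ∀ i, 0 ≤ f i := fun i => hglb.1 (Set.mem_range_self i)
    set S : D.ι → Set ℝ := fun a => (fun b => ‖f a - f b‖) '' {b | D.r a b} with hS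
    have hSne : ∀ a, (0:ℝ) ∈ S a := fun a => ⟨a, D.refl a, by simp⟩
    have hSbd : ∀ a, BddAbove (S a) := by
      intro a
      refine ⟨‖f a‖, ?_⟩
      rintro _ ⟨b, hb, rfl⟩
      apply norm_le_norm_of_abs_le_abs
      rw [abs_of_nonneg (sub_nonneg.2 (hdec a b hb)), abs_of_nonneg (hpos a)]
      exact sub_le_self _ (hpos b)
    set δ : D.ι → ℝ := fun a => sSup (S a) with hδ
    have hδ0 : ∀ a, 0 ≤ δ a := fun a => le_csSup (hSbd a) (hSne a)
    have hδub : ∀ a b, D.r a b → ‖f a - f b‖ ≤ δ a :=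
      fun a b hb => le_csSup (hSbd a) ⟨b, hb, rfl⟩
    have hstep : ∀ (a : D.ι) (n : ℕ), ∃ b, D.r a b ∧
        δ a - 1 / (n + 1) < ‖f a - f b‖ := by
      intro a n
      have hlt : δ a - 1 / ((n : ℝ) + 1) < δ a := by
        have h1 : (0:ℝ) < 1 / ((n : ℝ) + 1) := by positivity
        linarith
      obtain ⟨r, hr, hlt'⟩ := exists_lt_of_lt_csSup ⟨0, hSne a⟩ hlt
      obtain ⟨b, hb, rfl⟩ := hr
      exact ⟨b, hb, hlt'⟩
    choose step hstep1 hstep2 using hstep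
    obtain ⟨a0⟩ := D.nonempty
    set α : ℕ → D.ι := fun n => Nat.rec a0 (fun n a => step a n) n with hα
    have hchain : ∀ n, D.r (α n) (α (n + 1)) := fun n => hstep1 (α n) n
    have hmonoα : ∀ m n, m ≤ n → D.r (α m) (α n) := by
      intro m n hmn
      induction n, hmn using Nat.le_induction with
      | base => exact D.refl _
      | succ n hmn ih => exact D.trans _ _ _ ih (hchain n)
    set u : ℕ → X := fun n => f (α 0) - f (α n) with hu
    have humono : Monotone u :=
      fun m n hmn => sub_le_sub_left (hdec _ _ (hmonoα m n hmn)) _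
    have hubd : ∀ n, u n ≤ f (α 0) := fun n => sub_le_self _ (hpos _)
    obtain ⟨x, hxlub, hxt⟩ := aux_up hσ hyp u humono _ hubd
    set z : X := f (α 0) - x with hz
    have hfz : ∀ n, ‖f (α n) - z‖ = ‖x - u n‖ := by
      intro n
      apply congrArg norm
      simp only [hz, hu]
      abel
    have hfzt : Tendsto (fun n => ‖f (α n) - z‖) atTop (𝓝 0) :=
      hxt.congr fun n => (hfz n).symm
    have hfz' : Tendsto (fun n => f (α n)) atTop (𝓝 z) := by
      rw [tendsto_iff_norm_sub_tendsto_zero]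
      exact hfzt
    have hδt : Tendsto (fun n => δ (α n)) atTop (𝓝 0) := by
      apply squeeze_zero (fun n => hδ0 (α n))
        (g := fun n => ‖x - u n‖ + ‖x - u (n + 1)‖ + 1 / (n + 1))
      · intro n
        have h2 := hstep2 (α n) n
        have hstepeq : α (n + 1) = step (α n) n := rfl
        have h3 : ‖f (α n) - f (α (n + 1))‖ ≤ ‖x - u n‖ + ‖x - u (n + 1)‖ := by
          have heq : f (α n) - f (α (n + 1)) = (x - u n) - (x - u (n + 1)) := by
            simp only [hu]; abel
          rw [heq]
          exact norm_sub_le _ _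
        rw [← hstepeq] at h2
        linarith
      · have hlim1 : Tendsto (fun n : ℕ => ‖x - u (n + 1)‖) atTop (𝓝 0) :=
          hxt.comp (tendsto_add_atTop_nat 1)
        have hlim2 : Tendsto (fun n : ℕ => 1 / ((n : ℝ) + 1)) atTop (𝓝 0) :=
          tendsto_one_div_add_atTop_nhds_zero_nat
        simpa using (hxt.add hlim1).add hlim2
    have hzlb : ∀ β, z ≤ f β := by
      intro β
      have hkey : ∀ η : ℝ, 0 < η → ‖(z - f β)⁺‖ < η := by
        intro η hη
        have hsum : Tendsto (fun n => ‖f (α n) - z‖ + δ (α n)) atTop (𝓝 0) := by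
          simpa using hfzt.add hδt
        obtain ⟨N, hN⟩ := Metric.tendsto_atTop.mp hsum η hη
        have hNN := hN N le_rfl
        rw [Real.dist_eq, sub_zero] at hNN
        have hNlt : ‖f (α N) - z‖ + δ (α N) < η := lt_of_abs_lt hNN
        obtain ⟨γ, hβγ, hαγ⟩ := D.directed β (α N)
        have hle : (z - f β)⁺ ≤ (z - f γ)⁺ :=
          posPart_mono (sub_le_sub_left (hdec β γ hβγ) z)
        have habs : (z - f γ)⁺ ≤ |z - f γ| := by
          rw [posPart_def]
          exact sup_le (le_abs_self _) (abs_nonneg _)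
        have hnorm : ‖(z - f β)⁺‖ ≤ ‖z - f γ‖ := by
          apply norm_le_norm_of_abs_le_abs
          rw [abs_of_nonneg (posPart_nonneg _)]
          exact hle.trans habs
        have hsplit : ‖z - f γ‖ ≤ ‖f (α N) - z‖ + δ (α N) := by
          have heq : z - f γ = -(f (α N) - z) + (f (α N) - f γ) := by abel
          rw [heq]
          exact (norm_add_le _ _).trans
            (add_le_add (by rw [norm_neg]) (hδub _ _ hαγ))
        linarith
      have hnz : ‖(z - f β)⁺‖ = 0 := by
        by_contra hne
        have hpos2 : 0 < ‖(z - f β)⁺‖ :=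
          lt_of_le_of_ne (norm_nonneg _) (Ne.symm hne)
        exact absurd (hkey _ hpos2) (lt_irrefl _)
      have := norm_eq_zero.mp hnz
      have hle0 : z - f β ≤ 0 := posPart_eq_zero.mp this
      exact sub_nonpos.mp hle0
    have hzle : z ≤ 0 := hglb.2 (by rintro _ ⟨β, rfl⟩; exact hzlb β)
    have hzge : 0 ≤ z := ge_of_tendsto' hfz' fun n => hpos (α n)
    have hz0 : z = 0 := le_antisymm hzle hzge
    intro ε hε
    have hnt : Tendsto (fun n => ‖f (α n)‖) atTop (𝓝 0) := by
      have := hfz'.norm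
      rwa [hz0, norm_zero] at this
    obtain ⟨N, hN⟩ := Metric.tendsto_atTop.mp hnt ε hε
    have hNN := hN N le_rfl
    rw [Real.dist_eq, sub_zero] at hNN
    refine ⟨α N, fun i hi => ?_⟩
    have hle : ‖f i‖ ≤ ‖f (α N)‖ := by
      apply norm_le_norm_of_abs_le_abs
      rw [abs_of_nonneg (hpos i), abs_of_nonneg (hpos (α N))]
      exact hdec _ _ hi
    rw [abs_of_nonneg (norm_nonneg _)]
    exact lt_of_le_of_lt hle (lt_of_abs_lt hNN)
end
end
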